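/- Let G be a finite weighted planar graph with vertices a, b, c, d in cyclic order on a face F, and S a subset of the vertices of F disjoint from {a,b,c,d} that is both a,c-separated and b,d-separated. Then M_f(G∖{b})·M_f(G∖{a,c,d}) + M_f(G∖{d})·M_f(G∖{a,b,c}) = M_f(G∖{a})·M_f(G∖{b,c,d}) + M_f(G∖{a,b,d})·M_f(G∖{c}). -/

import Mathlib

open scoped Classical

variable {V : Type*} [Fintype V] [DecidableEq V] {R : Type*} [CommRing R]

/-- `M` is a matching of the induced subgraph of `G` on the vertex set `A`:
a set of edges of `G` contained in `A` that are pairwise vertex-disjoint. -/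
def IsMatchingOn (G : SimpleGraph V) (A : Finset V) (M : Finset (Sym2 V)) : Prop :=
  (∀ e ∈ M, e ∈ G.edgeSet) ∧ (∀ e ∈ M, ∀ v ∈ e, v ∈ A) ∧
  (∀ e ∈ M, ∀ f ∈ M, e ≠ f → ∀ v : V, v ∈ e → v ∉ f)

/-- `Mf G w S A` is the total weight (weight of a matching = product of its edge weights)
of all matchings of the induced subgraph of `G` on `A` in which every vertex of `A` not
belonging to the distinguished ("free") set `S` is matched. -/
noncomputable def Mf (G : SimpleGraph V) (w : Sym2 V → R) (S A : Finset V) : R :=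
  ∑ M ∈ Finset.univ.filter
      (fun M : Finset (Sym2 V) =>
        IsMatchingOn G A M ∧ ∀ v ∈ A, v ∉ S → ∃ e ∈ M, v ∈ e),
    ∏ e ∈ M, w e

/-- Two walks are (vertex-)disjoint. -/
def WalkDisjoint {G : SimpleGraph V} {u v u' v' : V} (P : G.Walk u v) (Q : G.Walk u' v') : Prop :=
  ∀ z : V, z ∈ P.support → z ∉ Q.support

/-- `S` is `a,c`-separated (relative to `b` and `d`): there is no triple of mutually
vertex-disjoint paths `P₁ : a — c`, `P₂ : b — s`, `P₃ : d — t` with `s ≠ t` in `S`. -/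
def Separated (G : SimpleGraph V) (S : Finset V) (a b c d : V) : Prop :=
  ¬ ∃ (s t : V) (P₁ : G.Walk a c) (P₂ : G.Walk b s) (P₃ : G.Walk d t),
      s ∈ S ∧ t ∈ S ∧ s ≠ t ∧ P₁.IsPath ∧ P₂.IsPath ∧ P₃.IsPath ∧
      WalkDisjoint P₁ P₂ ∧ WalkDisjoint P₁ P₃ ∧ WalkDisjoint P₂ P₃

/-- `L` is the boundary cycle of a face of a planar embedding of `G`, on which the four
vertices `a`, `b`, `c`, `d` occur in this cyclic order.  Planarity of the embedding is
encoded through its characteristic combinatorial consequence: two pairs of vertices that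
interleave on the boundary cycle of a face can never be joined by two vertex-disjoint
paths of `G`. -/
structure FaceConfig (G : SimpleGraph V) (L : List V) (a b c d : V) : Prop where
  nodup : L.Nodup
  cyclic : ∃ L' : List V, L ~r L' ∧ ∃ i j k l : Fin L'.length,
      i < j ∧ j < k ∧ k < l ∧ L'.get i = a ∧ L'.get j = b ∧ L'.get k = c ∧ L'.get l = d
  noncrossing : ∀ L' : List V, L ~r L' → ∀ i j k l : Fin L'.length, i < j → j < k → k < l →
      ¬ ∃ (P : G.Walk (L'.get i) (L'.get k)) (Q : G.Walk (L'.get j) (L'.get l)),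
          P.IsPath ∧ Q.IsPath ∧ WalkDisjoint P Q

set_option linter.unusedSectionVars false
set_option linter.unusedVariables false

namespace KuoAux
open Finset

variable {V : Type*} [Fintype V] [DecidableEq V]

/-- pairwise disjoint edge set -/
def PD (N : Finset (Sym2 V)) : Prop :=
  ∀ e ∈ N, ∀ f ∈ N, e ≠ f → ∀ v : V, v ∈ e → v ∉ f

lemma PD.mono {N N' : Finset (Sym2 V)} (h : PD N) (hs : N' ⊆ N) : PD N' :=
  fun e he f hf hef v hv => h e (hs he) f (hs hf) hef v hv

lemma PD.unique {N : Finset (Sym2 V)} (h : PD N) {v u u' : V}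
    (h1 : s(v, u) ∈ N) (h2 : s(v, u') ∈ N) : u = u' := by
  rcases eq_or_ne (s(v, u)) (s(v, u')) with he | he
  · exact Sym2.congr_right.mp he
  · exact absurd (Sym2.mem_mk_left v u') (h _ h1 _ h2 he v (Sym2.mem_mk_left v u))

/-- vertex covered by edge set -/
def cov (N : Finset (Sym2 V)) (v : V) : Prop := ∃ e ∈ N, v ∈ e

lemma cov_iff {N : Finset (Sym2 V)} {v : V} : cov N v ↔ ∃ u, s(v, u) ∈ N := by
  constructor
  · rintro ⟨e, he, hv⟩
    rcases Sym2.mem_iff_exists.mp hv with ⟨u, rfl⟩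
    exact ⟨u, he⟩
  · rintro ⟨u, hu⟩
    exact ⟨_, hu, Sym2.mem_mk_left v u⟩

/-- partner of `v` in edge set `N` -/
noncomputable def pr (N : Finset (Sym2 V)) (v : V) : Option V :=
  if h : ∃ u, s(v, u) ∈ N then some h.choose else none

lemma pr_mem {N : Finset (Sym2 V)} {v u : V} (h : pr N v = some u) : s(v, u) ∈ N := by
  unfold pr at h
  split_ifs at h with hh
  · obtain rfl : hh.choose = u := by injection h
    exact hh.choose_spec

lemma pr_eq_none {N : Finset (Sym2 V)} {v : V} : pr N v = none ↔ ∀ u, s(v, u) ∉ N := by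
  unfold pr
  split_ifs with hh
  · simp only [reduceCtorEq, false_iff, not_forall, not_not]; exact hh
  · push_neg at hh; simpa using hh

lemma pr_eq_some {N : Finset (Sym2 V)} (hN : PD N) {v u : V} (h : s(v, u) ∈ N) :
    pr N v = some u := by
  unfold pr
  rw [dif_pos ⟨u, h⟩]
  exact congrArg some (hN.unique (Exists.choose_spec (⟨u, h⟩ : ∃ u, s(v, u) ∈ N)) h)

/-- greedy alternating path builder -/
noncomputable def altL : ℕ → Finset (Sym2 V) → Finset (Sym2 V) → V → List V
  | 0, _, _, v => [v]
  | (n+1), A, B, v =>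
    Option.rec [v] (fun u => v :: altL n B (A.erase s(v, u)) u) (pr A v)

lemma altL_zero (A B : Finset (Sym2 V)) (v : V) : altL 0 A B v = [v] := rfl

lemma altL_succ_none {A : Finset (Sym2 V)} {v : V} (B : Finset (Sym2 V)) {n : ℕ}
    (h : pr A v = none) : altL (n+1) A B v = [v] := by
  rw [altL.eq_2, h]

lemma altL_succ_some {A : Finset (Sym2 V)} {v u : V} (B : Finset (Sym2 V)) {n : ℕ}
    (h : pr A v = some u) : altL (n+1) A B v = v :: altL n B (A.erase s(v, u)) u := by
  rw [altL.eq_2, h]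

lemma altL_ne_nil {n : ℕ} {A B : Finset (Sym2 V)} {v : V} : altL n A B v ≠ [] := by
  cases n with
  | zero => simp [altL_zero]
  | succ n =>
    cases h : pr A v with
    | none => rw [altL_succ_none B h]; simp
    | some u => rw [altL_succ_some B h]; simp

lemma altL_cons {n : ℕ} {A B : Finset (Sym2 V)} {v : V} :
    ∃ t, altL n A B v = v :: t := by
  cases n with
  | zero => exact ⟨[], rfl⟩
  | succ n =>
    cases h : pr A v with
    | none => exact ⟨[], altL_succ_none B h⟩
    | some u => exact ⟨_, altL_succ_some B h⟩

/-- invariants carried along the construction -/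
structure Inv (A B : Finset (Sym2 V)) (v : V) : Prop where
  pdA : PD A
  pdB : PD B
  ndA : ∀ e ∈ A, ¬ e.IsDiag
  ndB : ∀ e ∈ B, ¬ e.IsDiag
  dAB : ∀ e ∈ A, e ∉ B
  free : ∀ u, s(v, u) ∉ B

lemma Inv.step {A B : Finset (Sym2 V)} {v u : V} (h : Inv A B v) (hu : s(v, u) ∈ A) :
    Inv B (A.erase s(v, u)) u := by
  refine ⟨h.pdB, h.pdA.mono (erase_subset _ _), h.ndB,
    fun e he => h.ndA e (mem_of_mem_erase he),
    fun e he hee => h.dAB e (mem_of_mem_erase hee) he, ?_⟩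
  intro w hw
  rw [mem_erase] at hw
  have h1 : s(u, w) ∈ A := hw.2
  have h2 : s(u, v) ∈ A := by rwa [Sym2.eq_swap] at hu
  have := h.pdA.unique h1 h2
  subst this
  exact hw.1 (Sym2.eq_swap)

lemma altL_mem_edge {n : ℕ} {A B : Finset (Sym2 V)} {v : V} :
    ∀ z ∈ altL n A B v, z = v ∨ ∃ u, s(z, u) ∈ A ∪ B := by
  induction n generalizing A B v with
  | zero => intro z hz; rw [altL_zero] at hz; simp at hz; exact Or.inl hz
  | succ n ih =>
    intro z hz
    cases h : pr A v with
    | none =>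
      rw [altL_succ_none B h] at hz; simp at hz; exact Or.inl hz
    | some u =>
      rw [altL_succ_some B h] at hz
      rcases List.mem_cons.mp hz with rfl | hz'
      · exact Or.inl rfl
      · rcases ih z hz' with rfl | ⟨w, hw⟩
        · refine Or.inr ⟨v, ?_⟩
          rw [mem_union]
          have hm := pr_mem h
          rw [Sym2.eq_swap] at hm
          exact Or.inl hm
        · rw [mem_union] at hw
          rcases hw with hw | hw
          · exact Or.inr ⟨w, mem_union.mpr (Or.inr hw)⟩
          · exact Or.inr ⟨w, mem_union.mpr (Or.inl (mem_of_mem_erase hw))⟩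

lemma altL_nodup {n : ℕ} {A B : Finset (Sym2 V)} {v : V} (h : Inv A B v) :
    (altL n A B v).Nodup := by
  induction n generalizing A B v with
  | zero => simp [altL_zero]
  | succ n ih =>
    cases hp : pr A v with
    | none => rw [altL_succ_none B hp]; simp
    | some u =>
      have hu := pr_mem hp
      rw [altL_succ_some B hp]
      refine List.nodup_cons.mpr ⟨?_, ih (h.step hu)⟩
      intro hv
      rcases altL_mem_edge v hv with rfl | ⟨w, hw⟩
      · exact h.ndA _ hu (Sym2.mk_isDiag_iff.mpr rfl)
      · rw [mem_union] at hw
        rcases hw with hw | hw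
        · exact h.free w hw
        · rw [mem_erase] at hw
          exact hw.1 (by rw [h.pdA.unique hw.2 hu])

lemma altL_chain {n : ℕ} {A B C : Finset (Sym2 V)} {v : V} (hA : A ⊆ C) (hB : B ⊆ C) :
    List.Chain' (fun x y => s(x, y) ∈ C) (altL n A B v) := by
  induction n generalizing A B v with
  | zero => simp [altL_zero]; exact List.isChain_singleton _
  | succ n ih =>
    cases hp : pr A v with
    | none => rw [altL_succ_none B hp]; exact List.isChain_singleton _
    | some u =>
      rw [altL_succ_some B hp]
      obtain ⟨t, ht⟩ := altL_cons (n := n) (A := B) (B := A.erase s(v, u)) (v := u)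
      rw [ht, List.Chain', List.isChain_cons_cons]
      constructor
      · exact hA (pr_mem hp)
      · rw [← ht]; exact ih hB (fun e he => hA (mem_of_mem_erase he))

lemma altL_length_le {n : ℕ} {A B : Finset (Sym2 V)} {v : V} :
    (altL n A B v).length ≤ n + 1 := by
  induction n generalizing A B v with
  | zero => simp [altL_zero]
  | succ n ih =>
    cases hp : pr A v with
    | none => rw [altL_succ_none B hp]; simp
    | some u =>
      rw [altL_succ_some B hp, List.length_cons]
      exact Nat.succ_le_succ ih

/-! ## edges of a vertex list -/

def pathE : List V → Finset (Sym2 V)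
  | x :: y :: t => insert s(x, y) (pathE (y :: t))
  | _ => ∅

@[simp] lemma pathE_nil : pathE ([] : List V) = ∅ := rfl
@[simp] lemma pathE_single (v : V) : pathE [v] = ∅ := rfl
lemma pathE_cons_cons (x y : V) (t : List V) :
    pathE (x :: y :: t) = insert s(x, y) (pathE (y :: t)) := rfl

lemma pathE_subset_cons (x : V) (l : List V) : pathE l ⊆ pathE (x :: l) := by
  cases l with
  | nil => simp
  | cons y t => rw [pathE_cons_cons]; exact subset_insert _ _

lemma pathE_supp : ∀ {l : List V} {e : Sym2 V}, e ∈ pathE l → ∀ z ∈ e, z ∈ l := by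
  intro l
  induction l with
  | nil => simp
  | cons x t ih =>
    intro e he z hz
    cases t with
    | nil => simp at he
    | cons y t' =>
      rw [pathE_cons_cons, mem_insert] at he
      rcases he with rfl | he
      · rcases Sym2.mem_iff.mp hz with rfl | rfl
        · exact List.mem_cons_self
        · exact List.mem_cons_of_mem _ (List.mem_cons_self)
      · exact List.mem_cons_of_mem _ (ih he z hz)

lemma pathE_last_edge : ∀ {l : List V} (h : l ≠ []), 2 ≤ l.length →
    ∃ e ∈ pathE l, l.getLast h ∈ e := by
  intro l
  induction l with
  | nil => simp
  | cons x t ih =>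
    intro h hlen
    cases t with
    | nil => simp at hlen
    | cons y t' =>
      cases t' with
      | nil =>
        refine ⟨s(x, y), by rw [pathE_cons_cons]; exact mem_insert_self _ _, ?_⟩
        have hg : (x :: [y]).getLast h = y := by simp
        rw [hg]; exact Sym2.mem_mk_right x y
      | cons z t'' =>
        obtain ⟨e, he, hme⟩ := ih (by simp) (by simp)
        refine ⟨e, (pathE_subset_cons x _) he, ?_⟩
        rwa [List.getLast_cons (by simp)]

lemma pathE_last_unique : ∀ {l : List V} (h : l ≠ []), l.Nodup →
    ∀ e ∈ pathE l, ∀ f ∈ pathE l, l.getLast h ∈ e → l.getLast h ∈ f → e = f := by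
  intro l
  induction l with
  | nil => simp
  | cons x t ih =>
    intro h hnd e he f hf hle hlf
    cases t with
    | nil => simp at he
    | cons y t' =>
      have hyt : (y :: t') ≠ [] := by simp
      have hlast : (x :: y :: t').getLast h = (y :: t').getLast hyt :=
        List.getLast_cons hyt
      have hxlast : x ≠ (y :: t').getLast hyt := by
        intro hx
        exact (List.nodup_cons.mp hnd).1 (hx ▸ List.getLast_mem hyt)
      -- an edge of pathE containing the last vertex cannot be the first edge,
      -- unless t' = []
      have key : ∀ g ∈ pathE (x :: y :: t'), (x :: y :: t').getLast h ∈ g →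
          g ∈ pathE (y :: t') ∨ (t' = [] ∧ g = s(x, y)) := by
        intro g hg hmem
        rw [pathE_cons_cons, mem_insert] at hg
        rcases hg with rfl | hg
        · rw [hlast] at hmem
          rcases Sym2.mem_iff.mp hmem with hxx | hyy
          · exact absurd hxx.symm hxlast
          · -- last of (y::t') = y forces t' = []
            cases t' with
            | nil => exact Or.inr ⟨rfl, rfl⟩
            | cons z t'' =>
              exfalso
              have : (y :: z :: t'').getLast hyt ∈ z :: t'' := by
                rw [List.getLast_cons (by simp : (z :: t'') ≠ [])]
                exact List.getLast_mem _
              exact (List.nodup_cons.mp (List.nodup_cons.mp hnd).2).1 (hyy ▸ this)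
        · exact Or.inl hg
      rcases key e he hle with he' | ⟨ht', rfl⟩
      · rcases key f hf hlf with hf' | ⟨ht', rfl⟩
        · -- both in tail: induction
          rw [hlast] at hle hlf
          exact ih hyt (List.nodup_cons.mp hnd).2 e he' f hf' hle hlf
        · subst ht'; simp at he'
      · rcases key f hf hlf with hf' | ⟨ht'2, rfl⟩
        · subst ht'; simp at hf'
        · rfl

lemma pathE_interior : ∀ {l : List V} (h : l ≠ []), l.Nodup →
    ∀ z ∈ l, z ≠ l.head h → z ≠ l.getLast h →
    ∃ e ∈ pathE l, ∃ f ∈ pathE l, e ≠ f ∧ z ∈ e ∧ z ∈ f := by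
  intro l
  induction l with
  | nil => simp
  | cons x t ih =>
    intro h hnd z hz hzh hzl
    simp only [List.head_cons] at hzh
    rcases List.mem_cons.mp hz with rfl | hzt
    · exact absurd rfl hzh
    cases t with
    | nil => simp at hzt
    | cons y t' =>
      have hyt : (y :: t') ≠ [] := by simp
      have hlast : (x :: y :: t').getLast h = (y :: t').getLast hyt :=
        List.getLast_cons hyt
      rcases eq_or_ne z y with hzy | hzy
      · cases t' with
        | nil =>
          exfalso
          rw [hlast] at hzl
          simp only [List.getLast_singleton] at hzl
          exact hzl hzy
        | cons u t'' =>
          have hxny : x ≠ y := fun hxy =>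
            (List.nodup_cons.mp hnd).1 (hxy ▸ List.mem_cons_self (a := y))
          have hxnu : x ≠ u := fun hxu =>
            (List.nodup_cons.mp hnd).1
              (by rw [hxu]; exact List.mem_cons_of_mem _ (List.mem_cons_self))
          refine ⟨s(x, y), by rw [pathE_cons_cons]; exact mem_insert_self _ _,
                  s(y, u), ?_, ?_, ?_, ?_⟩
          · rw [pathE_cons_cons]
            refine mem_insert_of_mem ?_
            rw [pathE_cons_cons]
            exact mem_insert_self _ _
          · intro hef
            rw [Sym2.eq_iff] at hef
            rcases hef with ⟨h1, h2⟩ | ⟨h1, h2⟩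
            · exact hxny h1
            · exact hxnu h1
          · rw [hzy]; exact Sym2.mem_mk_right x y
          · rw [hzy]; exact Sym2.mem_mk_left y u
      · obtain ⟨e, he, f, hf, hef, hze, hzf⟩ :=
          ih hyt (List.nodup_cons.mp hnd).2 z hzt (by simpa using hzy)
            (by rw [hlast] at hzl; exact hzl)
        exact ⟨e, pathE_subset_cons x _ he, f, pathE_subset_cons x _ hf, hef, hze, hzf⟩

lemma pathE_subset {n : ℕ} {A B : Finset (Sym2 V)} {v : V} :
    ∀ e ∈ pathE (altL n A B v), e ∈ A ∪ B := by
  induction n generalizing A B v with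
  | zero => simp [altL_zero]
  | succ n ih =>
    cases hp : pr A v with
    | none => rw [altL_succ_none B hp]; simp
    | some u =>
      rw [altL_succ_some B hp]
      obtain ⟨t, ht⟩ := altL_cons (n := n) (A := B) (B := A.erase s(v, u)) (v := u)
      rw [ht, pathE_cons_cons, ← ht]
      intro e he
      rcases mem_insert.mp he with rfl | he'
      · exact mem_union.mpr (Or.inl (pr_mem hp))
      · rcases mem_union.mp (ih e he') with hb | ha
        · exact mem_union.mpr (Or.inr hb)
        · exact mem_union.mpr (Or.inl (mem_of_mem_erase ha))

/-- every `A ∪ B` edge at a vertex of the path is a path edge (full component) -/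
lemma altL_comp {n : ℕ} {A B : Finset (Sym2 V)} {v : V} (h : Inv A B v)
    (hlen : (altL n A B v).length ≤ n) :
    ∀ z ∈ altL n A B v, ∀ u, s(z, u) ∈ A ∪ B → s(z, u) ∈ pathE (altL n A B v) := by
  induction n generalizing A B v with
  | zero =>
    exfalso
    rw [altL_zero] at hlen; simp at hlen
  | succ n ih =>
    cases hp : pr A v with
    | none =>
      rw [altL_succ_none B hp]
      intro z hz u hu
      simp only [List.mem_singleton] at hz
      subst hz
      rcases mem_union.mp hu with ha | hb
      · exact absurd ha (pr_eq_none.mp hp u)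
      · exact absurd hb (h.free u)
    | some u =>
      have hu := pr_mem hp
      rw [altL_succ_some B hp] at hlen ⊢
      simp only [List.length_cons, Nat.add_le_add_iff_right] at hlen
      obtain ⟨t, ht⟩ := altL_cons (n := n) (A := B) (B := A.erase s(v, u)) (v := u)
      intro z hz w hw
      have hfirst : s(v, u) ∈ pathE (v :: altL n B (A.erase s(v, u)) u) := by
        rw [ht, pathE_cons_cons]; exact mem_insert_self _ _
      rcases List.mem_cons.mp hz with rfl | hzt
      · rcases mem_union.mp hw with ha | hb
        · have : w = u := h.pdA.unique ha hu
          subst this; exact hfirst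
        · exact absurd hb (h.free w)
      · -- z in the tail
        rcases eq_or_ne (s(z, w)) (s(v, u)) with heq | hne
        · rw [heq]; exact hfirst
        · have hmem : s(z, w) ∈ B ∪ A.erase s(v, u) := by
            rcases mem_union.mp hw with ha | hb
            · exact mem_union.mpr (Or.inr (mem_erase.mpr ⟨hne, ha⟩))
            · exact mem_union.mpr (Or.inl hb)
          have := ih (h.step hu) hlen z hzt w hmem
          exact (pathE_subset_cons v _) this

/-- determinism / congruence for the builder -/
lemma altL_congr {n : ℕ} {A B A' B' : Finset (Sym2 V)} {v : V}
    (pdA : PD A) (pdA' : PD A') (pdB : PD B) (pdB' : PD B')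
    (hag : ∀ z ∈ altL n A B v,
      (∀ u, s(z, u) ∈ A ↔ s(z, u) ∈ A') ∧ (∀ u, s(z, u) ∈ B ↔ s(z, u) ∈ B')) :
    altL n A' B' v = altL n A B v := by
  induction n generalizing A B A' B' v with
  | zero => simp [altL_zero]
  | succ n ih =>
    cases hp : pr A v with
    | none =>
      have hp' : pr A' v = none := by
        rw [pr_eq_none]
        intro u hu
        have hv : v ∈ altL (n+1) A B v := by
          obtain ⟨t, ht⟩ := altL_cons (n := n+1) (A := A) (B := B) (v := v)
          rw [ht]; exact List.mem_cons_self
        exact (pr_eq_none.mp hp u) (((hag v hv).1 u).mpr hu)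
      rw [altL_succ_none B hp, altL_succ_none B' hp']
    | some u =>
      have hu := pr_mem hp
      have hv : v ∈ altL (n+1) A B v := by
        obtain ⟨t, ht⟩ := altL_cons (n := n+1) (A := A) (B := B) (v := v)
        rw [ht]; exact List.mem_cons_self
      have hu' : s(v, u) ∈ A' := ((hag v hv).1 u).mp hu
      have hp' : pr A' v = some u := pr_eq_some pdA' hu'
      rw [altL_succ_some B hp, altL_succ_some B' hp']
      congr 1
      apply ih pdB pdB' (pdA.mono (erase_subset _ _)) (pdA'.mono (erase_subset _ _))
      intro z hz
      have hz' : z ∈ altL (n+1) A B v := by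
        rw [altL_succ_some B hp]; exact List.mem_cons_of_mem _ hz
      refine ⟨(hag z hz').2, fun w => ?_⟩
      rw [mem_erase, mem_erase]
      constructor
      · rintro ⟨h1, h2⟩; exact ⟨h1, ((hag z hz').1 w).mp h2⟩
      · rintro ⟨h1, h2⟩; exact ⟨h1, ((hag z hz').1 w).mpr h2⟩

/-- a chain of `Ded`-edges starting outside a full component stays outside -/
lemma chain_avoid {Ded E₁ : Finset (Sym2 V)} {l₁ : List V}
    (hcomp : ∀ z ∈ l₁, ∀ u, s(z, u) ∈ Ded → s(z, u) ∈ E₁)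
    (hsupp : ∀ e ∈ E₁, ∀ z ∈ e, z ∈ l₁) :
    ∀ l₂ : List V, List.Chain' (fun x y => s(x, y) ∈ Ded) l₂ →
      (∀ h : l₂ ≠ [], l₂.head h ∉ l₁) → ∀ z ∈ l₂, z ∉ l₁ := by
  intro l₂
  induction l₂ with
  | nil => simp
  | cons x t ih =>
    intro hc hh z hz
    have hx : x ∉ l₁ := hh (by simp)
    rcases List.mem_cons.mp hz with rfl | hzt
    · exact hx
    · refine ih (hc.tail) ?_ z hzt
      intro ht
      cases t with
      | nil => simp at ht
      | cons y t' =>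
        simp only [List.head_cons]
        intro hy
        have hedge : s(x, y) ∈ Ded := (List.isChain_cons_cons.mp hc).1
        have : s(y, x) ∈ Ded := by rwa [Sym2.eq_swap] at hedge
        have := hcomp y hy x this
        exact hx (hsupp _ this x (Sym2.mem_mk_right y x))

/-! ## the canonical alternating path between two matchings -/

noncomputable def pathP (M₁ M₂ : Finset (Sym2 V)) (v : V) : List V :=
  altL (Fintype.card V) (M₁ \ M₂) (M₂ \ M₁) v

lemma pathP_ne_nil {M₁ M₂ : Finset (Sym2 V)} {v : V} : pathP M₁ M₂ v ≠ [] := altL_ne_nil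

noncomputable def lastv (M₁ M₂ : Finset (Sym2 V)) (v : V) : V :=
  (pathP M₁ M₂ v).getLast pathP_ne_nil

noncomputable def eSet (M₁ M₂ : Finset (Sym2 V)) (v : V) : Finset (Sym2 V) :=
  pathE (pathP M₁ M₂ v)

structure Ctx (M₁ M₂ : Finset (Sym2 V)) (v₀ : V) : Prop where
  pd₁ : PD M₁
  pd₂ : PD M₂
  nd₁ : ∀ e ∈ M₁, ¬ e.IsDiag
  nd₂ : ∀ e ∈ M₂, ¬ e.IsDiag
  cv₁ : cov M₁ v₀
  cv₂ : ¬ cov M₂ v₀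

namespace Ctx

variable {M₁ M₂ : Finset (Sym2 V)} {v₀ : V}

lemma inv (h : Ctx M₁ M₂ v₀) : Inv (M₁ \ M₂) (M₂ \ M₁) v₀ := by
  refine ⟨h.pd₁.mono (sdiff_subset), h.pd₂.mono (sdiff_subset),
    fun e he => h.nd₁ e (mem_sdiff.mp he).1, fun e he => h.nd₂ e (mem_sdiff.mp he).1,
    fun e he hee => (mem_sdiff.mp hee).2 (mem_sdiff.mp he).1, ?_⟩
  intro u hu
  exact h.cv₂ (cov_iff.mpr ⟨u, (mem_sdiff.mp hu).1⟩)

lemma nodupP (h : Ctx M₁ M₂ v₀) : (pathP M₁ M₂ v₀).Nodup := altL_nodup h.inv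

lemma headP : ∃ t, pathP M₁ M₂ v₀ = v₀ :: t := altL_cons

lemma chainP : List.Chain' (fun x y => s(x, y) ∈ (M₁ \ M₂) ∪ (M₂ \ M₁)) (pathP M₁ M₂ v₀) :=
  altL_chain subset_union_left subset_union_right

lemma lenP (h : Ctx M₁ M₂ v₀) : (pathP M₁ M₂ v₀).length ≤ Fintype.card V :=
  (h.nodupP).length_le_card

lemma compP (h : Ctx M₁ M₂ v₀) :
    ∀ z ∈ pathP M₁ M₂ v₀, ∀ u, s(z, u) ∈ (M₁ \ M₂) ∪ (M₂ \ M₁) →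
      s(z, u) ∈ eSet M₁ M₂ v₀ :=
  altL_comp h.inv (h.lenP)

lemma suppP : ∀ e ∈ eSet M₁ M₂ v₀, ∀ z ∈ e, z ∈ pathP M₁ M₂ v₀ :=
  fun _ he _ hz => pathE_supp he _ hz

lemma esubP : ∀ e ∈ eSet M₁ M₂ v₀, e ∈ (M₁ \ M₂) ∪ (M₂ \ M₁) :=
  fun _ he => pathE_subset _ he

lemma firstE (h : Ctx M₁ M₂ v₀) :
    ∃ u, s(v₀, u) ∈ M₁ \ M₂ ∧ s(v₀, u) ∈ eSet M₁ M₂ v₀ ∧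
      2 ≤ (pathP M₁ M₂ v₀).length := by
  obtain ⟨u, hu⟩ := cov_iff.mp h.cv₁
  have hu1 : s(v₀, u) ∈ M₁ \ M₂ :=
    mem_sdiff.mpr ⟨hu, fun hm => h.cv₂ (cov_iff.mpr ⟨u, hm⟩)⟩
  have hc : 0 < Fintype.card V := Fintype.card_pos_iff.mpr ⟨v₀⟩
  obtain ⟨n, hn⟩ := Nat.exists_eq_succ_of_ne_zero hc.ne'
  have hpr : pr (M₁ \ M₂) v₀ = some u := pr_eq_some h.inv.pdA hu1
  have hP : pathP M₁ M₂ v₀ =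
      v₀ :: altL n (M₂ \ M₁) ((M₁ \ M₂).erase s(v₀, u)) u := by
    unfold pathP; rw [hn]; exact altL_succ_some _ hpr
  obtain ⟨t, ht⟩ := altL_cons (n := n) (A := M₂ \ M₁) (B := (M₁ \ M₂).erase s(v₀, u)) (v := u)
  refine ⟨u, hu1, ?_, ?_⟩
  · rw [eSet, hP, ht, pathE_cons_cons]; exact mem_insert_self _ _
  · rw [hP, ht]; simp [List.length_cons]
lemma lastvP (h : Ctx M₁ M₂ v₀) : lastv M₁ M₂ v₀ ≠ v₀ ∧ lastv M₁ M₂ v₀ ∈ pathP M₁ M₂ v₀ := by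
  have hmem : lastv M₁ M₂ v₀ ∈ pathP M₁ M₂ v₀ := List.getLast_mem _
  refine ⟨?_, hmem⟩
  obtain ⟨t, ht⟩ := headP (M₁ := M₁) (M₂ := M₂) (v₀ := v₀)
  obtain ⟨u, _, _, hlen⟩ := h.firstE
  have htne : t ≠ [] := by
    intro h0; rw [ht, h0] at hlen; simp at hlen
  have : lastv M₁ M₂ v₀ ∈ t := by
    unfold lastv
    rw [List.getLast_congr _ (by simp) ht, List.getLast_cons htne]
    exact List.getLast_mem _
  intro he
  have hnd := h.nodupP
  rw [ht, List.nodup_cons] at hnd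
  exact hnd.1 (he ▸ this)

lemma headP' (h : Ctx M₁ M₂ v₀) : (pathP M₁ M₂ v₀).head pathP_ne_nil = v₀ := by
  obtain ⟨t, ht⟩ := headP (M₁ := M₁) (M₂ := M₂) (v₀ := v₀)
  simp [ht]

lemma v₀_mem (h : Ctx M₁ M₂ v₀) : v₀ ∈ pathP M₁ M₂ v₀ := by
  obtain ⟨t, ht⟩ := headP (M₁ := M₁) (M₂ := M₂) (v₀ := v₀)
  rw [ht]; exact List.mem_cons_self

/-- last edge of the path -/
lemma lastE (h : Ctx M₁ M₂ v₀) :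
    ∃ f ∈ eSet M₁ M₂ v₀, lastv M₁ M₂ v₀ ∈ f ∧
      (∀ g ∈ eSet M₁ M₂ v₀, lastv M₁ M₂ v₀ ∈ g → g = f) := by
  obtain ⟨u, _, _, hlen⟩ := h.firstE
  obtain ⟨f, hf, hmf⟩ := pathE_last_edge pathP_ne_nil hlen
  exact ⟨f, hf, hmf, fun g hg hmg =>
    pathE_last_unique pathP_ne_nil h.nodupP g hg f hf hmg hmf⟩

lemma cov_symmDiff_of_no_edge {M E : Finset (Sym2 V)} {z : V}
    (hz : ∀ e ∈ E, z ∉ e) : cov (symmDiff M E) z ↔ cov M z := by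
  constructor
  · rintro ⟨e, he, hze⟩
    rcases Finset.mem_symmDiff.mp he with ⟨h1, _⟩ | ⟨h1, _⟩
    · exact ⟨e, h1, hze⟩
    · exact absurd hze (hz e h1)
  · rintro ⟨e, he, hze⟩
    exact ⟨e, Finset.mem_symmDiff.mpr (Or.inl ⟨he, fun hE => hz e hE hze⟩), hze⟩

lemma sdiff_symmDiff_eq {M₁ M₂ E : Finset (Sym2 V)}
    (hE : ∀ e ∈ E, e ∈ (M₁ \ M₂) ∪ (M₂ \ M₁)) :
    (symmDiff M₁ E) \ (symmDiff M₂ E) = symmDiff (M₁ \ M₂) E := by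
  ext e
  have hE' := fun h3 => hE e h3
  simp only [mem_sdiff, Finset.mem_symmDiff, mem_union, mem_sdiff] at hE' ⊢
  by_cases h1 : e ∈ M₁ <;> by_cases h2 : e ∈ M₂ <;> by_cases h3 : e ∈ E <;>
    simp [h1, h2, h3] at hE' ⊢ <;> tauto

lemma covNotP (h : Ctx M₁ M₂ v₀) {z : V} (hz : z ∉ pathP M₁ M₂ v₀) :
    (cov (symmDiff M₁ (eSet M₁ M₂ v₀)) z ↔ cov M₁ z) ∧
    (cov (symmDiff M₂ (eSet M₁ M₂ v₀)) z ↔ cov M₂ z) := by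
  have hz' : ∀ e ∈ eSet M₁ M₂ v₀, z ∉ e := fun e he hze => hz (suppP e he z hze)
  exact ⟨cov_symmDiff_of_no_edge hz', cov_symmDiff_of_no_edge hz'⟩

lemma covInt (h : Ctx M₁ M₂ v₀) {z : V} (hmem : z ∈ pathP M₁ M₂ v₀)
    (h0 : z ≠ v₀) (hy : z ≠ lastv M₁ M₂ v₀) :
    cov M₁ z ∧ cov M₂ z ∧ cov (symmDiff M₁ (eSet M₁ M₂ v₀)) z ∧
      cov (symmDiff M₂ (eSet M₁ M₂ v₀)) z := by
  obtain ⟨e, he, f, hf, hef, hze, hzf⟩ :=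
    pathE_interior pathP_ne_nil h.nodupP z hmem (by rw [h.headP']; exact h0) hy
  -- one of e, f is in M₁ \ M₂ and the other in M₂ \ M₁
  have key : ∃ e₁ ∈ eSet M₁ M₂ v₀, ∃ e₂ ∈ eSet M₁ M₂ v₀,
      e₁ ∈ M₁ \ M₂ ∧ e₂ ∈ M₂ \ M₁ ∧ z ∈ e₁ ∧ z ∈ e₂ := by
    rcases mem_union.mp (esubP e he) with he1 | he1 <;>
      rcases mem_union.mp (esubP f hf) with hf1 | hf1
    · exact absurd hzf (h.pd₁ e (mem_sdiff.mp he1).1 f (mem_sdiff.mp hf1).1 hef z hze)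
    · exact ⟨e, he, f, hf, he1, hf1, hze, hzf⟩
    · exact ⟨f, hf, e, he, hf1, he1, hzf, hze⟩
    · exact absurd hzf (h.pd₂ e (mem_sdiff.mp he1).1 f (mem_sdiff.mp hf1).1 hef z hze)
  obtain ⟨e₁, he₁E, e₂, he₂E, he₁, he₂, hz₁, hz₂⟩ := key
  refine ⟨⟨e₁, (mem_sdiff.mp he₁).1, hz₁⟩, ⟨e₂, (mem_sdiff.mp he₂).1, hz₂⟩, ?_, ?_⟩
  · exact ⟨e₂, Finset.mem_symmDiff.mpr (Or.inr ⟨he₂E, (mem_sdiff.mp he₂).2⟩), hz₂⟩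
  · exact ⟨e₁, Finset.mem_symmDiff.mpr (Or.inr ⟨he₁E, (mem_sdiff.mp he₁).2⟩), hz₁⟩

lemma covV₀ (h : Ctx M₁ M₂ v₀) :
    ¬ cov (symmDiff M₁ (eSet M₁ M₂ v₀)) v₀ ∧
      cov (symmDiff M₂ (eSet M₁ M₂ v₀)) v₀ := by
  obtain ⟨u, hu1, huE, _⟩ := h.firstE
  constructor
  · rintro ⟨g, hg, hzg⟩
    rcases Sym2.mem_iff_exists.mp hzg with ⟨u', rfl⟩
    rcases Finset.mem_symmDiff.mp hg with ⟨h1, h2⟩ | ⟨h1, h2⟩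
    · have : s(v₀, u') ∈ M₁ \ M₂ :=
        mem_sdiff.mpr ⟨h1, fun hm => h.cv₂ (cov_iff.mpr ⟨u', hm⟩)⟩
      exact h2 (h.compP v₀ h.v₀_mem u' (mem_union.mpr (Or.inl this)))
    · rcases mem_union.mp (esubP _ h1) with hh | hh
      · exact h2 (mem_sdiff.mp hh).1
      · exact h.cv₂ ⟨_, (mem_sdiff.mp hh).1, Sym2.mem_mk_left _ _⟩
  · exact ⟨s(v₀, u), Finset.mem_symmDiff.mpr
      (Or.inr ⟨huE, (mem_sdiff.mp hu1).2⟩), Sym2.mem_mk_left _ _⟩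

lemma covY (h : Ctx M₁ M₂ v₀) :
    (cov M₁ (lastv M₁ M₂ v₀) ∧ ¬ cov M₂ (lastv M₁ M₂ v₀) ∧
      ¬ cov (symmDiff M₁ (eSet M₁ M₂ v₀)) (lastv M₁ M₂ v₀) ∧
      cov (symmDiff M₂ (eSet M₁ M₂ v₀)) (lastv M₁ M₂ v₀)) ∨
    (¬ cov M₁ (lastv M₁ M₂ v₀) ∧ cov M₂ (lastv M₁ M₂ v₀) ∧
      cov (symmDiff M₁ (eSet M₁ M₂ v₀)) (lastv M₁ M₂ v₀) ∧
      ¬ cov (symmDiff M₂ (eSet M₁ M₂ v₀)) (lastv M₁ M₂ v₀)) := by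
  set y := lastv M₁ M₂ v₀ with hy
  obtain ⟨f, hfE, hmf, huniq⟩ := h.lastE
  have hymem : y ∈ pathP M₁ M₂ v₀ := (h.lastvP).2
  rcases mem_union.mp (esubP f hfE) with hf1 | hf1
  · left
    have hfM₁ := (mem_sdiff.mp hf1).1
    have hfnM₂ := (mem_sdiff.mp hf1).2
    have ncov2 : ¬ cov M₂ y := by
      rintro ⟨g, hg, hmg⟩
      by_cases hgM₁ : g ∈ M₁
      · rcases eq_or_ne g f with rfl | hne
        · exact hfnM₂ hg
        · exact h.pd₁ g hgM₁ f hfM₁ hne y hmg hmf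
      · rcases Sym2.mem_iff_exists.mp hmg with ⟨u, rfl⟩
        have : s(y, u) ∈ M₂ \ M₁ := mem_sdiff.mpr ⟨hg, hgM₁⟩
        have hE := h.compP y hymem u (mem_union.mpr (Or.inr this))
        have := huniq _ hE (Sym2.mem_mk_left _ _)
        subst this
        exact hgM₁ hfM₁
    refine ⟨⟨f, hfM₁, hmf⟩, ncov2, ?_, ?_⟩
    · rintro ⟨g, hg, hmg⟩
      rcases Finset.mem_symmDiff.mp hg with ⟨h1, h2⟩ | ⟨h1, h2⟩
      · rcases eq_or_ne g f with rfl | hne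
        · exact h2 hfE
        · exact h.pd₁ g h1 f hfM₁ hne y hmg hmf
      · rcases mem_union.mp (esubP _ h1) with hh | hh
        · exact h2 (mem_sdiff.mp hh).1
        · exact ncov2 ⟨g, (mem_sdiff.mp hh).1, hmg⟩
    · exact ⟨f, Finset.mem_symmDiff.mpr (Or.inr ⟨hfE, hfnM₂⟩), hmf⟩
  · right
    have hfM₂ := (mem_sdiff.mp hf1).1
    have hfnM₁ := (mem_sdiff.mp hf1).2
    have ncov1 : ¬ cov M₁ y := by
      rintro ⟨g, hg, hmg⟩
      by_cases hgM₂ : g ∈ M₂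
      · rcases eq_or_ne g f with rfl | hne
        · exact hfnM₁ hg
        · exact h.pd₂ g hgM₂ f hfM₂ hne y hmg hmf
      · rcases Sym2.mem_iff_exists.mp hmg with ⟨u, rfl⟩
        have : s(y, u) ∈ M₁ \ M₂ := mem_sdiff.mpr ⟨hg, hgM₂⟩
        have hE := h.compP y hymem u (mem_union.mpr (Or.inl this))
        have := huniq _ hE (Sym2.mem_mk_left _ _)
        subst this
        exact hgM₂ hfM₂
    refine ⟨ncov1, ⟨f, hfM₂, hmf⟩, ?_, ?_⟩
    · exact ⟨f, Finset.mem_symmDiff.mpr (Or.inr ⟨hfE, hfnM₁⟩), hmf⟩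
    · rintro ⟨g, hg, hmg⟩
      rcases Finset.mem_symmDiff.mp hg with ⟨h1, h2⟩ | ⟨h1, h2⟩
      · rcases eq_or_ne g f with rfl | hne
        · exact h2 hfE
        · exact h.pd₂ g h1 f hfM₂ hne y hmg hmf
      · rcases mem_union.mp (esubP _ h1) with hh | hh
        · exact ncov1 ⟨g, (mem_sdiff.mp hh).1, hmg⟩
        · exact h2 (mem_sdiff.mp hh).1

lemma pdSwap₁ (h : Ctx M₁ M₂ v₀) : PD (symmDiff M₁ (eSet M₁ M₂ v₀)) := by
  intro e he f hf hef z hze hzf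
  rcases Finset.mem_symmDiff.mp he with ⟨he1, he2⟩ | ⟨he1, he2⟩ <;>
    rcases Finset.mem_symmDiff.mp hf with ⟨hf1, hf2⟩ | ⟨hf1, hf2⟩
  · exact h.pd₁ e he1 f hf1 hef z hze hzf
  · -- e ∈ M₁ \ E, f ∈ E \ M₁
    have hfN₂ : f ∈ M₂ \ M₁ := by
      rcases mem_union.mp (esubP f hf1) with hh | hh
      · exact absurd (mem_sdiff.mp hh).1 hf2
      · exact hh
    by_cases heM₂ : e ∈ M₂
    · exact h.pd₂ e heM₂ f (mem_sdiff.mp hfN₂).1 hef z hze hzf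
    · have hzP : z ∈ pathP M₁ M₂ v₀ := suppP f hf1 z hzf
      rcases Sym2.mem_iff_exists.mp hze with ⟨u, he'⟩
      have : s(z, u) ∈ M₁ \ M₂ := mem_sdiff.mpr ⟨he' ▸ he1, he' ▸ heM₂⟩
      have := h.compP z hzP u (mem_union.mpr (Or.inl this))
      exact absurd (he' ▸ this) he2
  · have heN₂ : e ∈ M₂ \ M₁ := by
      rcases mem_union.mp (esubP e he1) with hh | hh
      · exact absurd (mem_sdiff.mp hh).1 he2
      · exact hh
    by_cases hfM₂ : f ∈ M₂
    · exact h.pd₂ e (mem_sdiff.mp heN₂).1 f hfM₂ hef z hze hzf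
    · have hzP : z ∈ pathP M₁ M₂ v₀ := suppP e he1 z hze
      rcases Sym2.mem_iff_exists.mp hzf with ⟨u, hf'⟩
      have : s(z, u) ∈ M₁ \ M₂ := mem_sdiff.mpr ⟨hf' ▸ hf1, hf' ▸ hfM₂⟩
      have := h.compP z hzP u (mem_union.mpr (Or.inl this))
      exact absurd (hf' ▸ this) hf2
  · have heN₂ : e ∈ M₂ \ M₁ := by
      rcases mem_union.mp (esubP e he1) with hh | hh
      · exact absurd (mem_sdiff.mp hh).1 he2
      · exact hh
    have hfN₂ : f ∈ M₂ \ M₁ := by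
      rcases mem_union.mp (esubP f hf1) with hh | hh
      · exact absurd (mem_sdiff.mp hh).1 hf2
      · exact hh
    exact h.pd₂ e (mem_sdiff.mp heN₂).1 f (mem_sdiff.mp hfN₂).1 hef z hze hzf

lemma subSwap₁ (h : Ctx M₁ M₂ v₀) : symmDiff M₁ (eSet M₁ M₂ v₀) ⊆ M₁ ∪ M₂ := by
  intro e he
  rcases Finset.mem_symmDiff.mp he with ⟨h1, _⟩ | ⟨h1, _⟩
  · exact mem_union.mpr (Or.inl h1)
  · rcases mem_union.mp (esubP e h1) with hh | hh
    · exact mem_union.mpr (Or.inl (mem_sdiff.mp hh).1)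
    · exact mem_union.mpr (Or.inr (mem_sdiff.mp hh).1)

lemma rebuildP (h : Ctx M₁ M₂ v₀) :
    ∀ z ∈ pathP M₁ M₂ v₀, ∀ u,
      (s(z, u) ∈ (symmDiff M₁ (eSet M₁ M₂ v₀)) \ (symmDiff M₂ (eSet M₁ M₂ v₀)) ↔
        s(z, u) ∈ M₂ \ M₁) ∧
      (s(z, u) ∈ (symmDiff M₂ (eSet M₁ M₂ v₀)) \ (symmDiff M₁ (eSet M₁ M₂ v₀)) ↔
        s(z, u) ∈ M₁ \ M₂) := by
  intro z hz u
  rw [sdiff_symmDiff_eq (esubP), sdiff_symmDiff_eq (fun e he => by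
    rw [union_comm]; exact esubP e he)]
  constructor
  · constructor
    · intro hm
      rcases Finset.mem_symmDiff.mp hm with ⟨h1, h2⟩ | ⟨h1, h2⟩
      · exact absurd (h.compP z hz u (mem_union.mpr (Or.inl h1))) h2
      · rcases mem_union.mp (esubP _ h1) with hh | hh
        · exact absurd hh h2
        · exact hh
    · intro hm
      exact Finset.mem_symmDiff.mpr (Or.inr
        ⟨h.compP z hz u (mem_union.mpr (Or.inr hm)),
         fun hc => (mem_sdiff.mp hm).2 (mem_sdiff.mp hc).1⟩)
  · constructor
    · intro hm
      rcases Finset.mem_symmDiff.mp hm with ⟨h1, h2⟩ | ⟨h1, h2⟩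
      · exact absurd (h.compP z hz u (mem_union.mpr (Or.inr h1))) h2
      · rcases mem_union.mp (esubP _ h1) with hh | hh
        · exact hh
        · exact absurd hh h2
    · intro hm
      exact Finset.mem_symmDiff.mpr (Or.inr
        ⟨h.compP z hz u (mem_union.mpr (Or.inl hm)),
         fun hc => (mem_sdiff.mp hm).2 (mem_sdiff.mp hc).1⟩)

lemma rebuildO (h : Ctx M₁ M₂ v₀) :
    ∀ z, z ∉ pathP M₁ M₂ v₀ → ∀ u,
      (s(z, u) ∈ (symmDiff M₁ (eSet M₁ M₂ v₀)) \ (symmDiff M₂ (eSet M₁ M₂ v₀)) ↔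
        s(z, u) ∈ M₁ \ M₂) ∧
      (s(z, u) ∈ (symmDiff M₂ (eSet M₁ M₂ v₀)) \ (symmDiff M₁ (eSet M₁ M₂ v₀)) ↔
        s(z, u) ∈ M₂ \ M₁) := by
  intro z hz u
  rw [sdiff_symmDiff_eq (esubP), sdiff_symmDiff_eq (fun e he => by
    rw [union_comm]; exact esubP e he)]
  have hnE : s(z, u) ∉ eSet M₁ M₂ v₀ :=
    fun hc => hz (suppP _ hc z (Sym2.mem_mk_left _ _))
  constructor
  · constructor
    · intro hm
      rcases Finset.mem_symmDiff.mp hm with ⟨h1, _⟩ | ⟨h1, _⟩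
      · exact h1
      · exact absurd h1 hnE
    · intro hm
      exact Finset.mem_symmDiff.mpr (Or.inl ⟨hm, hnE⟩)
  · constructor
    · intro hm
      rcases Finset.mem_symmDiff.mp hm with ⟨h1, _⟩ | ⟨h1, _⟩
      · exact h1
      · exact absurd h1 hnE
    · intro hm
      exact Finset.mem_symmDiff.mpr (Or.inl ⟨hm, hnE⟩)

end Ctx

lemma pathP_congr {K₁ K₂ M₁ M₂ : Finset (Sym2 V)} {x : V}
    (pdm₁ : PD M₁) (pdm₂ : PD M₂) (pdk₁ : PD K₁) (pdk₂ : PD K₂)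
    (hag : ∀ z ∈ pathP M₁ M₂ x,
      (∀ u, s(z, u) ∈ K₁ \ K₂ ↔ s(z, u) ∈ M₁ \ M₂) ∧
      (∀ u, s(z, u) ∈ K₂ \ K₁ ↔ s(z, u) ∈ M₂ \ M₁)) :
    pathP K₁ K₂ x = pathP M₁ M₂ x := by
  unfold pathP
  exact altL_congr (pdm₁.mono sdiff_subset) (pdk₁.mono sdiff_subset)
    (pdm₂.mono sdiff_subset) (pdk₂.mono sdiff_subset)
    (fun z hz => ⟨fun u => ((hag z hz).1 u).symm, fun u => ((hag z hz).2 u).symm⟩)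

lemma pathP_head_any {A B : Finset (Sym2 V)} {x : V} (h : pathP A B x ≠ []) :
    (pathP A B x).head h = x := by
  obtain ⟨t, ht⟩ : ∃ t, pathP A B x = x :: t := altL_cons
  simp [ht]

namespace Ctx

variable {M₁ M₂ : Finset (Sym2 V)} {v₀ : V}

lemma pdSwap₂ (h : Ctx M₁ M₂ v₀) : PD (symmDiff M₂ (eSet M₁ M₂ v₀)) := by
  intro e he f hf hef z hze hzf
  rcases Finset.mem_symmDiff.mp he with ⟨he1, he2⟩ | ⟨he1, he2⟩ <;>
    rcases Finset.mem_symmDiff.mp hf with ⟨hf1, hf2⟩ | ⟨hf1, hf2⟩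
  · exact h.pd₂ e he1 f hf1 hef z hze hzf
  · have hfN₁ : f ∈ M₁ \ M₂ := by
      rcases mem_union.mp (esubP f hf1) with hh | hh
      · exact hh
      · exact absurd (mem_sdiff.mp hh).1 hf2
    by_cases heM₁ : e ∈ M₁
    · exact h.pd₁ e heM₁ f (mem_sdiff.mp hfN₁).1 hef z hze hzf
    · have hzP : z ∈ pathP M₁ M₂ v₀ := suppP f hf1 z hzf
      rcases Sym2.mem_iff_exists.mp hze with ⟨u, he'⟩
      have : s(z, u) ∈ M₂ \ M₁ := mem_sdiff.mpr ⟨he' ▸ he1, he' ▸ heM₁⟩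
      have := h.compP z hzP u (mem_union.mpr (Or.inr this))
      exact absurd (he' ▸ this) he2
  · have heN₁ : e ∈ M₁ \ M₂ := by
      rcases mem_union.mp (esubP e he1) with hh | hh
      · exact hh
      · exact absurd (mem_sdiff.mp hh).1 he2
    by_cases hfM₁ : f ∈ M₁
    · exact h.pd₁ e (mem_sdiff.mp heN₁).1 f hfM₁ hef z hze hzf
    · have hzP : z ∈ pathP M₁ M₂ v₀ := suppP e he1 z hze
      rcases Sym2.mem_iff_exists.mp hzf with ⟨u, hf'⟩
      have : s(z, u) ∈ M₂ \ M₁ := mem_sdiff.mpr ⟨hf' ▸ hf1, hf' ▸ hfM₁⟩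
      have := h.compP z hzP u (mem_union.mpr (Or.inr this))
      exact absurd (hf' ▸ this) hf2
  · have heN₁ : e ∈ M₁ \ M₂ := by
      rcases mem_union.mp (esubP e he1) with hh | hh
      · exact hh
      · exact absurd (mem_sdiff.mp hh).1 he2
    have hfN₁ : f ∈ M₁ \ M₂ := by
      rcases mem_union.mp (esubP f hf1) with hh | hh
      · exact hh
      · exact absurd (mem_sdiff.mp hh).1 hf2
    exact h.pd₁ e (mem_sdiff.mp heN₁).1 f (mem_sdiff.mp hfN₁).1 hef z hze hzf

lemma subSwap₂ (h : Ctx M₁ M₂ v₀) : symmDiff M₂ (eSet M₁ M₂ v₀) ⊆ M₁ ∪ M₂ := by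
  intro e he
  rcases Finset.mem_symmDiff.mp he with ⟨h1, _⟩ | ⟨h1, _⟩
  · exact mem_union.mpr (Or.inr h1)
  · rcases mem_union.mp (esubP e h1) with hh | hh
    · exact mem_union.mpr (Or.inl (mem_sdiff.mp hh).1)
    · exact mem_union.mpr (Or.inr (mem_sdiff.mp hh).1)

/-- swapping the path reverses the roles of the two matchings along it -/
lemma pathP_swap (h : Ctx M₁ M₂ v₀) :
    pathP (symmDiff M₂ (eSet M₁ M₂ v₀)) (symmDiff M₁ (eSet M₁ M₂ v₀)) v₀ =
      pathP M₁ M₂ v₀ := by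
  apply pathP_congr h.pd₁ h.pd₂ h.pdSwap₂ h.pdSwap₁
  intro z hz
  exact ⟨fun u => (h.rebuildP z hz u).2, fun u => (h.rebuildP z hz u).1⟩

/-- paths disjoint from the swapped path are unchanged -/
lemma pathP_stable₁ (h : Ctx M₁ M₂ v₀) {x : V}
    (hd : ∀ z ∈ pathP M₁ M₂ x, z ∉ pathP M₁ M₂ v₀) :
    pathP (symmDiff M₁ (eSet M₁ M₂ v₀)) (symmDiff M₂ (eSet M₁ M₂ v₀)) x =
      pathP M₁ M₂ x := by
  apply pathP_congr h.pd₁ h.pd₂ h.pdSwap₁ h.pdSwap₂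
  intro z hz
  exact ⟨fun u => (h.rebuildO z (hd z hz) u).1, fun u => (h.rebuildO z (hd z hz) u).2⟩

lemma pathP_stable₂ (h : Ctx M₁ M₂ v₀) {x : V}
    (hd : ∀ z ∈ pathP M₂ M₁ x, z ∉ pathP M₁ M₂ v₀) :
    pathP (symmDiff M₂ (eSet M₁ M₂ v₀)) (symmDiff M₁ (eSet M₁ M₂ v₀)) x =
      pathP M₂ M₁ x := by
  apply pathP_congr h.pd₂ h.pd₁ h.pdSwap₂ h.pdSwap₁
  intro z hz
  exact ⟨fun u => (h.rebuildO z (hd z hz) u).2, fun u => (h.rebuildO z (hd z hz) u).1⟩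

/-- paths started outside the canonical path avoid it entirely -/
lemma pathP_avoid₁ (h : Ctx M₁ M₂ v₀) {x : V} (hx : x ∉ pathP M₁ M₂ v₀) :
    ∀ z ∈ pathP M₁ M₂ x, z ∉ pathP M₁ M₂ v₀ := by
  have hcomp : ∀ z ∈ pathP M₁ M₂ v₀, ∀ u,
      s(z, u) ∈ (M₁ \ M₂) ∪ (M₂ \ M₁) → s(z, u) ∈ eSet M₁ M₂ v₀ := h.compP
  refine chain_avoid hcomp (fun e he z hz => suppP e he z hz) _ chainP ?_
  intro hne
  rw [pathP_head_any]
  exact hx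

lemma pathP_avoid₂ (h : Ctx M₁ M₂ v₀) {x : V} (hx : x ∉ pathP M₁ M₂ v₀) :
    ∀ z ∈ pathP M₂ M₁ x, z ∉ pathP M₁ M₂ v₀ := by
  have hcomp : ∀ z ∈ pathP M₁ M₂ v₀, ∀ u,
      s(z, u) ∈ (M₁ \ M₂) ∪ (M₂ \ M₁) → s(z, u) ∈ eSet M₁ M₂ v₀ := h.compP
  refine chain_avoid hcomp (fun e he z hz => suppP e he z hz) _
    (chainP.imp ?_) ?_
  · intro p q hpq
    rw [union_comm]; exact hpq
  · intro hne
    rw [pathP_head_any]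
    exact hx

end Ctx

/-- weight preservation under swapping -/
lemma prod_swap_pair {R : Type*} [CommRing R] (w : Sym2 V → R) {M₁ M₂ E : Finset (Sym2 V)}
    (hE : ∀ e ∈ E, e ∈ (M₁ \ M₂) ∪ (M₂ \ M₁)) :
    (∏ e ∈ symmDiff M₁ E, w e) * ∏ e ∈ symmDiff M₂ E, w e =
      (∏ e ∈ M₁, w e) * ∏ e ∈ M₂, w e := by
  have hsd : ∀ M : Finset (Sym2 V), symmDiff M E = (M \ E) ∪ (E \ M) := by
    intro M; rw [symmDiff_def, sup_eq_union]
  have hdisj : ∀ M : Finset (Sym2 V), Disjoint (M \ E) (E \ M) := fun M => disjoint_sdiff_sdiff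
  have h1 : E \ M₁ = M₂ ∩ E := by
    ext e
    simp only [mem_sdiff, mem_inter]
    constructor
    · rintro ⟨h1, h2⟩
      rcases mem_union.mp (hE e h1) with hh | hh
      · exact absurd (mem_sdiff.mp hh).1 h2
      · exact ⟨(mem_sdiff.mp hh).1, h1⟩
    · rintro ⟨h1, h2⟩
      rcases mem_union.mp (hE e h2) with hh | hh
      · exact absurd h1 (mem_sdiff.mp hh).2
      · exact ⟨h2, (mem_sdiff.mp hh).2⟩
  have h2 : E \ M₂ = M₁ ∩ E := by
    ext e
    simp only [mem_sdiff, mem_inter]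
    constructor
    · rintro ⟨h1, h2⟩
      rcases mem_union.mp (hE e h1) with hh | hh
      · exact ⟨(mem_sdiff.mp hh).1, h1⟩
      · exact absurd (mem_sdiff.mp hh).1 h2
    · rintro ⟨h1, h2⟩
      rcases mem_union.mp (hE e h2) with hh | hh
      · exact ⟨h2, (mem_sdiff.mp hh).2⟩
      · exact absurd h1 (mem_sdiff.mp hh).2
  have key : ∀ M : Finset (Sym2 V), (∏ e ∈ M \ E, w e) * ∏ e ∈ M ∩ E, w e = ∏ e ∈ M, w e := by
    intro M
    have : M \ (M ∩ E) = M \ E := by rw [sdiff_inter_self_left]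
    rw [← this]
    exact Finset.prod_sdiff inter_subset_left
  rw [hsd M₁, hsd M₂, Finset.prod_union (hdisj M₁), Finset.prod_union (hdisj M₂), h1, h2]
  calc (((∏ e ∈ M₁ \ E, w e) * ∏ e ∈ M₂ ∩ E, w e) *
        ((∏ e ∈ M₂ \ E, w e) * ∏ e ∈ M₁ ∩ E, w e))
      = ((∏ e ∈ M₁ \ E, w e) * ∏ e ∈ M₁ ∩ E, w e) *
        ((∏ e ∈ M₂ \ E, w e) * ∏ e ∈ M₂ ∩ E, w e) := by ring
    _ = (∏ e ∈ M₁, w e) * ∏ e ∈ M₂, w e := by rw [key M₁, key M₂]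

/-! ## walks from chains -/

def walkOf (G : SimpleGraph V) : (l : List V) → List.Chain' G.Adj l → (h : l ≠ []) →
    G.Walk (l.head h) (l.getLast h)
  | [], _, h => absurd rfl h
  | [v], _, _ => SimpleGraph.Walk.nil
  | x :: y :: t, hc, _ =>
      SimpleGraph.Walk.cons (List.isChain_cons_cons.mp hc).1
        ((walkOf G (y :: t) (List.isChain_cons_cons.mp hc).2 (by simp)).copy rfl
          (List.getLast_cons (by simp)).symm)

lemma walkOf_support (G : SimpleGraph V) : ∀ (l : List V) (hc : List.Chain' G.Adj l)
    (h : l ≠ []), (walkOf G l hc h).support = l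
  | [], _, h => absurd rfl h
  | [v], _, _ => rfl
  | x :: y :: t, hc, _ => by
      rw [walkOf]
      erw [SimpleGraph.Walk.support_cons, SimpleGraph.Walk.support_copy,
        walkOf_support G (y :: t) (List.isChain_cons_cons.mp hc).2 (by simp)]
      simp

namespace Ctx

variable {M₁ M₂ : Finset (Sym2 V)} {v₀ : V}

lemma walkP {G : SimpleGraph V} (h : Ctx M₁ M₂ v₀)
    (hG : ∀ e ∈ M₁ ∪ M₂, e ∈ G.edgeSet) :
    ∃ W : G.Walk v₀ (lastv M₁ M₂ v₀), W.IsPath ∧ W.support = pathP M₁ M₂ v₀ := by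
  have hc : List.Chain' G.Adj (pathP M₁ M₂ v₀) := by
    refine chainP.imp ?_
    intro p q hpq
    rw [← SimpleGraph.mem_edgeSet]
    apply hG
    rcases mem_union.mp hpq with hh | hh
    · exact mem_union.mpr (Or.inl (mem_sdiff.mp hh).1)
    · exact mem_union.mpr (Or.inr (mem_sdiff.mp hh).1)
  refine ⟨(walkOf G _ hc pathP_ne_nil).copy (h.headP') (by unfold lastv; rfl), ?_, ?_⟩
  · rw [SimpleGraph.Walk.isPath_def, SimpleGraph.Walk.support_copy,
      walkOf_support]
    exact h.nodupP
  · rw [SimpleGraph.Walk.support_copy, walkOf_support]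

end Ctx

/-! ## pair-level machinery -/

def MatG (G : SimpleGraph V) (M : Finset (Sym2 V)) : Prop :=
  (∀ e ∈ M, e ∈ G.edgeSet) ∧ PD M

def GoodP (G : SimpleGraph V) (S X : Finset V) (M : Finset (Sym2 V)) : Prop :=
  MatG G M ∧ (∀ v, cov M v → v ∉ X) ∧ (∀ v, v ∉ X → v ∉ S → cov M v)

noncomputable def pFrom (x : Finset (Sym2 V) × Finset (Sym2 V)) (v : V) : List V :=
  if ∃ u, s(v, u) ∈ x.1 \ x.2 then pathP x.1 x.2 v else pathP x.2 x.1 v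

lemma pFrom_ne_nil {x : Finset (Sym2 V) × Finset (Sym2 V)} {v : V} : pFrom x v ≠ [] := by
  unfold pFrom; split_ifs <;> exact pathP_ne_nil

noncomputable def epF (x : Finset (Sym2 V) × Finset (Sym2 V)) (v : V) : V :=
  (pFrom x v).getLast pFrom_ne_nil

noncomputable def eF (x : Finset (Sym2 V) × Finset (Sym2 V)) (v : V) : Finset (Sym2 V) :=
  pathE (pFrom x v)

lemma pFrom_eq₁ {x : Finset (Sym2 V) × Finset (Sym2 V)} {v : V}
    (hc : cov x.1 v) (hn : ¬ cov x.2 v) : pFrom x v = pathP x.1 x.2 v := by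
  unfold pFrom
  rw [if_pos]
  obtain ⟨u, hu⟩ := cov_iff.mp hc
  exact ⟨u, mem_sdiff.mpr ⟨hu, fun hm => hn (cov_iff.mpr ⟨u, hm⟩)⟩⟩

lemma pFrom_eq₂ {x : Finset (Sym2 V) × Finset (Sym2 V)} {v : V}
    (hn : ¬ cov x.1 v) : pFrom x v = pathP x.2 x.1 v := by
  unfold pFrom
  rw [if_neg]
  rintro ⟨u, hu⟩
  exact hn (cov_iff.mpr ⟨u, (mem_sdiff.mp hu).1⟩)

lemma pFrom_swap {x : Finset (Sym2 V) × Finset (Sym2 V)} {v : V}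
    (h : (cov x.1 v ∧ ¬ cov x.2 v) ∨ (¬ cov x.1 v ∧ cov x.2 v)) :
    pFrom (x.2, x.1) v = pFrom x v := by
  rcases h with ⟨h1, h2⟩ | ⟨h1, h2⟩
  · rw [pFrom_eq₁ h1 h2, pFrom_eq₂ (x := (x.2, x.1)) h2]
  · rw [pFrom_eq₂ h1, pFrom_eq₁ (x := (x.2, x.1)) h2 h1]

lemma epF_congr {x y : Finset (Sym2 V) × Finset (Sym2 V)} {v v' : V}
    (h : pFrom x v = pFrom y v') : epF x v = epF y v' := by
  unfold epF
  exact List.getLast_congr _ _ h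

lemma eF_congr {x y : Finset (Sym2 V) × Finset (Sym2 V)} {v v' : V}
    (h : pFrom x v = pFrom y v') : eF x v = eF y v' := by
  unfold eF; rw [h]

/-- the whole hypothesis bundle -/
structure Setting (G : SimpleGraph V) (S : Finset V) (a b c d : V) (X₁ X₂ : Finset V)
    (x : Finset (Sym2 V) × Finset (Sym2 V)) : Prop where
  g₁ : GoodP G S X₁ x.1
  g₂ : GoodP G S X₂ x.2
  part : X₁ ∪ X₂ = {a, b, c, d}
  disj : Disjoint X₁ X₂
  dS : Disjoint ({a, b, c, d} : Finset V) S

namespace Setting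

variable {G : SimpleGraph V} {S : Finset V} {a b c d : V} {X₁ X₂ : Finset V}
  {x : Finset (Sym2 V) × Finset (Sym2 V)}

lemma dX₁S (h : Setting G S a b c d X₁ X₂ x) : Disjoint X₁ S :=
  Finset.disjoint_left.mpr fun {z} hz hzS =>
    (Finset.disjoint_left.mp h.dS)
      (h.part ▸ mem_union.mpr (Or.inl hz)) hzS

lemma dX₂S (h : Setting G S a b c d X₁ X₂ x) : Disjoint X₂ S :=
  Finset.disjoint_left.mpr fun {z} hz hzS =>
    (Finset.disjoint_left.mp h.dS)
      (h.part ▸ mem_union.mpr (Or.inr hz)) hzS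

lemma status (h : Setting G S a b c d X₁ X₂ x) {v : V}
    (hv : v ∈ ({a, b, c, d} : Finset V)) :
    v ∉ S ∧ ((v ∈ X₂ ∧ v ∉ X₁ ∧ cov x.1 v ∧ ¬ cov x.2 v) ∨
             (v ∈ X₁ ∧ v ∉ X₂ ∧ ¬ cov x.1 v ∧ cov x.2 v)) := by
  have hvS : v ∉ S := Finset.disjoint_left.mp h.dS hv
  refine ⟨hvS, ?_⟩
  have hvm : v ∈ X₁ ∪ X₂ := h.part ▸ hv
  rcases mem_union.mp hvm with h1 | h2
  · right
    have h2' : v ∉ X₂ := Finset.disjoint_left.mp h.disj h1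
    exact ⟨h1, h2', fun hc => (h.g₁.2.1 v hc) h1, h.g₂.2.2 v h2' hvS⟩
  · left
    have h1' : v ∉ X₁ := Finset.disjoint_right.mp h.disj h2
    exact ⟨h2, h1', h.g₁.2.2 v h1' hvS, fun hc => (h.g₂.2.1 v hc) h2⟩

lemma ndG {M : Finset (Sym2 V)} (hM : MatG G M) : ∀ e ∈ M, ¬ e.IsDiag :=
  fun e he => (SimpleGraph.not_isDiag_of_mem_edgeSet G (hM.1 e he))

/-- the oriented context when `v` is covered by `x.1` -/
lemma ctx₂ (h : Setting G S a b c d X₁ X₂ x) {v : V}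
    (hc : cov x.1 v) (hn : ¬ cov x.2 v) : Ctx x.1 x.2 v :=
  ⟨h.g₁.1.2, h.g₂.1.2, ndG h.g₁.1, ndG h.g₂.1, hc, hn⟩

lemma ctx₁ (h : Setting G S a b c d X₁ X₂ x) {v : V}
    (hc : cov x.2 v) (hn : ¬ cov x.1 v) : Ctx x.2 x.1 v :=
  ⟨h.g₂.1.2, h.g₁.1.2, ndG h.g₂.1, ndG h.g₁.1, hc, hn⟩

end Setting

lemma goodSwapAux {G : SimpleGraph V} {S : Finset V} {M₁ M₂ : Finset (Sym2 V)}
    {X₁ X₂ : Finset V} {v₀ : V}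
    (hctx : Ctx M₁ M₂ v₀)
    (hG₁ : GoodP G S X₁ M₁) (hG₂ : GoodP G S X₂ M₂)
    (hv₂ : v₀ ∈ X₂) (hv₁ : v₀ ∉ X₁)
    (hd₁ : Disjoint X₁ S) (hd₂ : Disjoint X₂ S) :
    (lastv M₁ M₂ v₀ ∈ X₁ ∪ X₂ ∪ S) ∧
    GoodP G S (symmDiff X₁ (insert v₀ ({lastv M₁ M₂ v₀} \ S)))
      (symmDiff M₁ (eSet M₁ M₂ v₀)) ∧
    GoodP G S (symmDiff X₂ (insert v₀ ({lastv M₁ M₂ v₀} \ S)))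
      (symmDiff M₂ (eSet M₁ M₂ v₀)) := by
  set y := lastv M₁ M₂ v₀ with hy
  set E := eSet M₁ M₂ v₀ with hE
  set D₀ : Finset V := insert v₀ ({y} \ S) with hD₀
  have hD : ∀ z, z ∈ D₀ ↔ z = v₀ ∨ (z = y ∧ y ∉ S) := by
    intro z
    simp only [hD₀, mem_insert, mem_sdiff, mem_singleton]
    constructor
    · rintro (rfl | ⟨rfl, hs⟩)
      · exact Or.inl rfl
      · exact Or.inr ⟨rfl, hs⟩
    · rintro (rfl | ⟨rfl, hs⟩)
      · exact Or.inl rfl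
      · exact Or.inr ⟨rfl, hs⟩
  have hedges : ∀ e ∈ M₁ ∪ M₂, e ∈ G.edgeSet := by
    intro e he
    rcases mem_union.mp he with h' | h'
    · exact hG₁.1.1 e h'
    · exact hG₂.1.1 e h'
  have hyv₀ : y ≠ v₀ := (hctx.lastvP).1
  have hymem : y ∈ pathP M₁ M₂ v₀ := (hctx.lastvP).2
  -- case analysis on the type of the last edge
  rcases hctx.covY with ⟨c1, c2, c3, c4⟩ | ⟨c1, c2, c3, c4⟩
  · -- case A : y was M₁-covered, becomes M₂-covered
    have hyX : y ∈ X₂ ∨ y ∈ S := by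
      by_cases hyS : y ∈ S
      · exact Or.inr hyS
      · by_cases hyX₂ : y ∈ X₂
        · exact Or.inl hyX₂
        · exact absurd (hG₂.2.2 y hyX₂ hyS) c2
    have hyX₁ : y ∉ X₁ := fun hc => hG₁.2.1 y c1 hc
    refine ⟨?_, ⟨⟨fun e he => hedges e (hctx.subSwap₁ he), hctx.pdSwap₁⟩, ?_, ?_⟩,
            ⟨⟨fun e he => hedges e (hctx.subSwap₂ he), hctx.pdSwap₂⟩, ?_, ?_⟩⟩
    · rcases hyX with h' | h'
      · exact mem_union.mpr (Or.inl (mem_union.mpr (Or.inr h')))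
      · exact mem_union.mpr (Or.inr h')
    · -- cov (ΔM₁) z → z ∉ X₁ ∆ D₀
      intro z hcz hzm
      rcases Finset.mem_symmDiff.mp hzm with ⟨h1, h2⟩ | ⟨h1, h2⟩
      · -- z ∈ X₁ \ D₀
        have hz₀ : z ≠ v₀ := fun hzz => h2 ((hD z).mpr (Or.inl hzz))
        have hzy : z ≠ y := by
          intro hzz
          exact h2 ((hD z).mpr (Or.inr ⟨hzz, Finset.disjoint_left.mp hd₁ (hzz ▸ h1)⟩))
        have hnc : ¬ cov M₁ z := fun hc => hG₁.2.1 z hc h1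
        by_cases hzP : z ∈ pathP M₁ M₂ v₀
        · exact hnc (hctx.covInt hzP hz₀ hzy).1
        · exact hnc ((hctx.covNotP hzP).1.mp hcz)
      · -- z ∈ D₀ \ X₁
        rcases (hD z).mp h1 with rfl | ⟨rfl, hyS⟩
        · exact (hctx.covV₀).1 hcz
        · exact c3 hcz
    · -- z ∉ X₁ ∆ D₀ → z ∉ S → cov (ΔM₁) z
      intro z hzm hzS
      have hziff : z ∈ X₁ ↔ z ∈ D₀ := by
        by_cases h1 : z ∈ X₁ <;> by_cases h2 : z ∈ D₀ <;> simp [h1, h2] at hzm ⊢ <;>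
          exact absurd (Finset.mem_symmDiff.mpr (by tauto)) hzm
      by_cases h1 : z ∈ X₁
      · rcases (hD z).mp (hziff.mp h1) with rfl | ⟨rfl, hyS'⟩
        · exact absurd h1 hv₁
        · exact absurd h1 hyX₁
      · have h2 : z ∉ D₀ := fun hc => h1 (hziff.mpr hc)
        have hz₀ : z ≠ v₀ := fun hzz => h2 ((hD z).mpr (Or.inl hzz))
        have hzy : z ≠ y := fun hzz => h2 ((hD z).mpr (Or.inr ⟨hzz, hzz ▸ hzS⟩))
        have hcz : cov M₁ z := hG₁.2.2 z h1 hzS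
        by_cases hzP : z ∈ pathP M₁ M₂ v₀
        · exact (hctx.covInt hzP hz₀ hzy).2.2.1
        · exact ((hctx.covNotP hzP).1.mpr hcz)
    · -- cov (ΔM₂) z → z ∉ X₂ ∆ D₀
      intro z hcz hzm
      rcases Finset.mem_symmDiff.mp hzm with ⟨h1, h2⟩ | ⟨h1, h2⟩
      · have hz₀ : z ≠ v₀ := fun hzz => h2 ((hD z).mpr (Or.inl hzz))
        have hzy : z ≠ y := by
          intro hzz
          exact h2 ((hD z).mpr (Or.inr ⟨hzz, Finset.disjoint_left.mp hd₂ (hzz ▸ h1)⟩))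
        have hnc : ¬ cov M₂ z := fun hc => hG₂.2.1 z hc h1
        by_cases hzP : z ∈ pathP M₁ M₂ v₀
        · exact hnc (hctx.covInt hzP hz₀ hzy).2.1
        · exact hnc ((hctx.covNotP hzP).2.mp hcz)
      · rcases (hD z).mp h1 with rfl | ⟨rfl, hyS⟩
        · exact absurd hv₂ h2
        · -- z = y ∉ X₂, y ∉ S : then y ∈ X₂ ∨ S is contradicted
          rcases hyX with h' | h'
          · exact h2 h'
          · exact hyS h'
    · -- z ∉ X₂ ∆ D₀ → z ∉ S → cov (ΔM₂) z
      intro z hzm hzS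
      have hziff : z ∈ X₂ ↔ z ∈ D₀ := by
        by_cases h1 : z ∈ X₂ <;> by_cases h2 : z ∈ D₀ <;> simp [h1, h2] at hzm ⊢ <;>
          exact absurd (Finset.mem_symmDiff.mpr (by tauto)) hzm
      by_cases h1 : z ∈ X₂
      · rcases (hD z).mp (hziff.mp h1) with rfl | ⟨rfl, hyS'⟩
        · exact (hctx.covV₀).2
        · exact c4
      · have h2 : z ∉ D₀ := fun hc => h1 (hziff.mpr hc)
        have hz₀ : z ≠ v₀ := fun hzz => h2 ((hD z).mpr (Or.inl hzz))
        have hzy : z ≠ y := fun hzz => h2 ((hD z).mpr (Or.inr ⟨hzz, hzz ▸ hzS⟩))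
        have hcz : cov M₂ z := hG₂.2.2 z h1 hzS
        by_cases hzP : z ∈ pathP M₁ M₂ v₀
        · exact (hctx.covInt hzP hz₀ hzy).2.2.2
        · exact ((hctx.covNotP hzP).2.mpr hcz)
  · -- case B : y was M₂-covered, becomes M₁-covered
    have hyX : y ∈ X₁ ∨ y ∈ S := by
      by_cases hyS : y ∈ S
      · exact Or.inr hyS
      · by_cases hyX₁ : y ∈ X₁
        · exact Or.inl hyX₁
        · exact absurd (hG₁.2.2 y hyX₁ hyS) c1
    have hyX₂ : y ∉ X₂ := fun hc => hG₂.2.1 y c2 hc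
    refine ⟨?_, ⟨⟨fun e he => hedges e (hctx.subSwap₁ he), hctx.pdSwap₁⟩, ?_, ?_⟩,
            ⟨⟨fun e he => hedges e (hctx.subSwap₂ he), hctx.pdSwap₂⟩, ?_, ?_⟩⟩
    · rcases hyX with h' | h'
      · exact mem_union.mpr (Or.inl (mem_union.mpr (Or.inl h')))
      · exact mem_union.mpr (Or.inr h')
    · intro z hcz hzm
      rcases Finset.mem_symmDiff.mp hzm with ⟨h1, h2⟩ | ⟨h1, h2⟩
      · have hz₀ : z ≠ v₀ := fun hzz => h2 ((hD z).mpr (Or.inl hzz))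
        have hzy : z ≠ y := by
          intro hzz
          exact h2 ((hD z).mpr (Or.inr ⟨hzz, Finset.disjoint_left.mp hd₁ (hzz ▸ h1)⟩))
        have hnc : ¬ cov M₁ z := fun hc => hG₁.2.1 z hc h1
        by_cases hzP : z ∈ pathP M₁ M₂ v₀
        · exact hnc (hctx.covInt hzP hz₀ hzy).1
        · exact hnc ((hctx.covNotP hzP).1.mp hcz)
      · rcases (hD z).mp h1 with rfl | ⟨rfl, hyS⟩
        · exact (hctx.covV₀).1 hcz
        · -- z = y ∉ X₁, ∉ S : caseB has cov M₁ y impossible? here ¬cov M₁ y = c1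
          rcases hyX with h' | h'
          · exact h2 h'
          · exact hyS h'
    · intro z hzm hzS
      have hziff : z ∈ X₁ ↔ z ∈ D₀ := by
        by_cases h1 : z ∈ X₁ <;> by_cases h2 : z ∈ D₀ <;> simp [h1, h2] at hzm ⊢ <;>
          exact absurd (Finset.mem_symmDiff.mpr (by tauto)) hzm
      by_cases h1 : z ∈ X₁
      · rcases (hD z).mp (hziff.mp h1) with rfl | ⟨rfl, hyS'⟩
        · exact absurd h1 hv₁
        · exact c3
      · have h2 : z ∉ D₀ := fun hc => h1 (hziff.mpr hc)
        have hz₀ : z ≠ v₀ := fun hzz => h2 ((hD z).mpr (Or.inl hzz))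
        have hzy : z ≠ y := fun hzz => h2 ((hD z).mpr (Or.inr ⟨hzz, hzz ▸ hzS⟩))
        have hcz : cov M₁ z := hG₁.2.2 z h1 hzS
        by_cases hzP : z ∈ pathP M₁ M₂ v₀
        · exact (hctx.covInt hzP hz₀ hzy).2.2.1
        · exact ((hctx.covNotP hzP).1.mpr hcz)
    · intro z hcz hzm
      rcases Finset.mem_symmDiff.mp hzm with ⟨h1, h2⟩ | ⟨h1, h2⟩
      · have hz₀ : z ≠ v₀ := fun hzz => h2 ((hD z).mpr (Or.inl hzz))
        have hzy : z ≠ y := by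
          intro hzz
          exact h2 ((hD z).mpr (Or.inr ⟨hzz, Finset.disjoint_left.mp hd₂ (hzz ▸ h1)⟩))
        have hnc : ¬ cov M₂ z := fun hc => hG₂.2.1 z hc h1
        by_cases hzP : z ∈ pathP M₁ M₂ v₀
        · exact hnc (hctx.covInt hzP hz₀ hzy).2.1
        · exact hnc ((hctx.covNotP hzP).2.mp hcz)
      · rcases (hD z).mp h1 with rfl | ⟨rfl, hyS⟩
        · exact absurd hv₂ h2
        · exact c4 hcz
    · intro z hzm hzS
      have hziff : z ∈ X₂ ↔ z ∈ D₀ := by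
        by_cases h1 : z ∈ X₂ <;> by_cases h2 : z ∈ D₀ <;> simp [h1, h2] at hzm ⊢ <;>
          exact absurd (Finset.mem_symmDiff.mpr (by tauto)) hzm
      by_cases h1 : z ∈ X₂
      · rcases (hD z).mp (hziff.mp h1) with rfl | ⟨rfl, hyS'⟩
        · exact (hctx.covV₀).2
        · exact absurd h1 hyX₂
      · have h2 : z ∉ D₀ := fun hc => h1 (hziff.mpr hc)
        have hz₀ : z ≠ v₀ := fun hzz => h2 ((hD z).mpr (Or.inl hzz))
        have hzy : z ≠ y := fun hzz => h2 ((hD z).mpr (Or.inr ⟨hzz, hzz ▸ hzS⟩))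
        have hcz : cov M₂ z := hG₂.2.2 z h1 hzS
        by_cases hzP : z ∈ pathP M₁ M₂ v₀
        · exact (hctx.covInt hzP hz₀ hzy).2.2.2
        · exact ((hctx.covNotP hzP).2.mpr hcz)

lemma pFrom_head {x : Finset (Sym2 V) × Finset (Sym2 V)} {v : V} (h : pFrom x v ≠ []) :
    (pFrom x v).head h = v := by
  unfold pFrom at h ⊢
  split_ifs with hc
  · exact pathP_head_any _
  · exact pathP_head_any _

/-- all the facts we need about the alternating path from one of the four corners -/
structure VF (G : SimpleGraph V) (S : Finset V) (X₁ X₂ : Finset V)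
    (x : Finset (Sym2 V) × Finset (Sym2 V)) (v : V) : Prop where
  ep_ne : epF x v ≠ v
  ep_mem : epF x v ∈ pFrom x v
  v_mem : v ∈ pFrom x v
  nodup : (pFrom x v).Nodup
  interior : ∀ z ∈ pFrom x v, z ≠ v → z ≠ epF x v → cov x.1 z ∧ cov x.2 z
  classify : epF x v ∈ X₁ ∪ X₂ ∪ S
  walk : ∃ W : G.Walk v (epF x v), W.IsPath ∧ W.support = pFrom x v
  good₁ : GoodP G S (symmDiff X₁ (insert v ({epF x v} \ S))) (symmDiff x.1 (eF x v))
  good₂ : GoodP G S (symmDiff X₂ (insert v ({epF x v} \ S))) (symmDiff x.2 (eF x v))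
  esub : ∀ e ∈ eF x v, e ∈ (x.1 \ x.2) ∪ (x.2 \ x.1)
  esupp : ∀ e ∈ eF x v, ∀ z ∈ e, z ∈ pFrom x v
  back : pFrom (symmDiff x.1 (eF x v), symmDiff x.2 (eF x v)) v = pFrom x v
  stable : ∀ u, u ∉ pFrom x v →
    pFrom (symmDiff x.1 (eF x v), symmDiff x.2 (eF x v)) u = pFrom x u
  avoid : ∀ u, u ∉ pFrom x v → ∀ z ∈ pFrom x u, z ∉ pFrom x v
  after : (cov (symmDiff x.1 (eF x v)) v ∧ ¬ cov (symmDiff x.2 (eF x v)) v) ∨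
    (¬ cov (symmDiff x.1 (eF x v)) v ∧ cov (symmDiff x.2 (eF x v)) v)
  covOut : ∀ u, u ∉ pFrom x v →
    (cov (symmDiff x.1 (eF x v)) u ↔ cov x.1 u) ∧
    (cov (symmDiff x.2 (eF x v)) u ↔ cov x.2 u)

namespace Setting

variable {G : SimpleGraph V} {S : Finset V} {a b c d : V} {X₁ X₂ : Finset V}
  {x : Finset (Sym2 V) × Finset (Sym2 V)}

theorem vf (h : Setting G S a b c d X₁ X₂ x) {v : V}
    (hv : v ∈ ({a, b, c, d} : Finset V)) : VF G S X₁ X₂ x v := by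
  obtain ⟨hvS, hst⟩ := h.status hv
  rcases hst with ⟨hX₂, hX₁, hc1, hc2⟩ | ⟨hX₁', hX₂', hc1, hc2⟩
  · -- v covered by x.1
    have hctx : Ctx x.1 x.2 v := h.ctx₂ hc1 hc2
    have hPeq : pFrom x v = pathP x.1 x.2 v := pFrom_eq₁ hc1 hc2
    have hyeq : epF x v = lastv x.1 x.2 v := by
      unfold epF lastv
      exact List.getLast_congr _ _ hPeq
    have heeq : eF x v = eSet x.1 x.2 v := by
      unfold eF eSet; rw [hPeq]
    have hedges : ∀ e ∈ x.1 ∪ x.2, e ∈ G.edgeSet := by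
      intro e he
      rcases mem_union.mp he with h' | h'
      · exact h.g₁.1.1 e h'
      · exact h.g₂.1.1 e h'
    obtain ⟨hcls, hg₁, hg₂⟩ :=
      goodSwapAux hctx h.g₁ h.g₂ hX₂ hX₁ h.dX₁S h.dX₂S
    refine ⟨?_, ?_, ?_, ?_, ?_, ?_, ?_, ?_, ?_, ?_, ?_, ?_, ?_, ?_, ?_, ?_⟩
    · rw [hyeq]; exact (hctx.lastvP).1
    · rw [hyeq, hPeq]; exact (hctx.lastvP).2
    · rw [hPeq]; exact hctx.v₀_mem
    · rw [hPeq]; exact hctx.nodupP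
    · intro z hz hz₀ hzy
      rw [hPeq] at hz
      have := hctx.covInt hz hz₀ (by rwa [hyeq] at hzy)
      exact ⟨this.1, this.2.1⟩
    · rw [hyeq]; exact hcls
    · obtain ⟨W, hW1, hW2⟩ := hctx.walkP hedges
      refine ⟨W.copy rfl hyeq.symm, ?_, ?_⟩
      · rwa [SimpleGraph.Walk.isPath_copy]
      · rw [SimpleGraph.Walk.support_copy, hW2, hPeq]
    · rw [hyeq, heeq]; exact hg₁
    · rw [hyeq, heeq]; exact hg₂
    · rw [heeq]
      intro e he
      exact Ctx.esubP e he
    · rw [heeq, hPeq]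
      intro e he z hz
      exact Ctx.suppP e he z hz
    · -- back
      have hnc : ¬ cov (symmDiff x.1 (eF x v)) v := by
        rw [heeq]; exact (hctx.covV₀).1
      rw [pFrom_eq₂ (x := (symmDiff x.1 (eF x v), symmDiff x.2 (eF x v))) hnc]
      simp only [heeq]
      rw [hctx.pathP_swap, hPeq]
    · -- stable
      intro u hu
      rw [hPeq] at hu
      have hreb := hctx.rebuildO u hu
      have hcond : (∃ w, s(u, w) ∈ (symmDiff x.1 (eF x v)) \ (symmDiff x.2 (eF x v))) ↔
          (∃ w, s(u, w) ∈ x.1 \ x.2) := by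
        rw [heeq]
        exact exists_congr fun w => (hreb w).1
      by_cases hC : ∃ w, s(u, w) ∈ x.1 \ x.2
      · rw [pFrom, if_pos (hcond.mpr hC), pFrom, if_pos hC]
        simp only [heeq]
        exact hctx.pathP_stable₁ (hctx.pathP_avoid₁ hu)
      · rw [pFrom, if_neg (fun hc => hC (hcond.mp hc)), pFrom, if_neg hC]
        simp only [heeq]
        exact hctx.pathP_stable₂ (hctx.pathP_avoid₂ hu)
    · -- avoid
      intro u hu z hz
      rw [hPeq] at hu ⊢
      unfold pFrom at hz
      split_ifs at hz with hC
      · exact hctx.pathP_avoid₁ hu z hz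
      · exact hctx.pathP_avoid₂ hu z hz
    · -- after
      right
      rw [heeq]
      exact ⟨(hctx.covV₀).1, (hctx.covV₀).2⟩
    · -- covOut
      intro u hu
      rw [hPeq] at hu
      rw [heeq]
      exact hctx.covNotP hu
  · -- v covered by x.2
    have hctx : Ctx x.2 x.1 v := h.ctx₁ hc2 hc1
    have hPeq : pFrom x v = pathP x.2 x.1 v := pFrom_eq₂ hc1
    have hyeq : epF x v = lastv x.2 x.1 v := by
      unfold epF lastv
      exact List.getLast_congr _ _ hPeq
    have heeq : eF x v = eSet x.2 x.1 v := by
      unfold eF eSet; rw [hPeq]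
    have hedges : ∀ e ∈ x.2 ∪ x.1, e ∈ G.edgeSet := by
      intro e he
      rcases mem_union.mp he with h' | h'
      · exact h.g₂.1.1 e h'
      · exact h.g₁.1.1 e h'
    obtain ⟨hcls, hg₂, hg₁⟩ :=
      goodSwapAux hctx h.g₂ h.g₁ hX₁' hX₂' h.dX₂S h.dX₁S
    refine ⟨?_, ?_, ?_, ?_, ?_, ?_, ?_, ?_, ?_, ?_, ?_, ?_, ?_, ?_, ?_, ?_⟩
    · rw [hyeq]; exact (hctx.lastvP).1
    · rw [hyeq, hPeq]; exact (hctx.lastvP).2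
    · rw [hPeq]; exact hctx.v₀_mem
    · rw [hPeq]; exact hctx.nodupP
    · intro z hz hz₀ hzy
      rw [hPeq] at hz
      have := hctx.covInt hz hz₀ (by rwa [hyeq] at hzy)
      exact ⟨this.2.1, this.1⟩
    · rw [hyeq]
      rcases mem_union.mp hcls with h' | h'
      · rcases mem_union.mp h' with h'' | h''
        · exact mem_union.mpr (Or.inl (mem_union.mpr (Or.inr h'')))
        · exact mem_union.mpr (Or.inl (mem_union.mpr (Or.inl h'')))
      · exact mem_union.mpr (Or.inr h')
    · obtain ⟨W, hW1, hW2⟩ := hctx.walkP hedges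
      refine ⟨W.copy rfl hyeq.symm, ?_, ?_⟩
      · rwa [SimpleGraph.Walk.isPath_copy]
      · rw [SimpleGraph.Walk.support_copy, hW2, hPeq]
    · rw [hyeq, heeq]; exact hg₁
    · rw [hyeq, heeq]; exact hg₂
    · rw [heeq]
      intro e he
      rcases mem_union.mp (Ctx.esubP e he) with h' | h'
      · exact mem_union.mpr (Or.inr h')
      · exact mem_union.mpr (Or.inl h')
    · rw [heeq, hPeq]
      intro e he z hz
      exact Ctx.suppP e he z hz
    · -- back
      have hcv : cov (symmDiff x.1 (eF x v)) v := by
        rw [heeq]; exact (hctx.covV₀).2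
      have hnc : ¬ cov (symmDiff x.2 (eF x v)) v := by
        rw [heeq]; exact (hctx.covV₀).1
      rw [pFrom_eq₁ (x := (symmDiff x.1 (eF x v), symmDiff x.2 (eF x v))) hcv hnc]
      simp only [heeq]
      rw [hctx.pathP_swap, hPeq]
    · -- stable
      intro u hu
      rw [hPeq] at hu
      have hreb := hctx.rebuildO u hu
      have hcond : (∃ w, s(u, w) ∈ (symmDiff x.1 (eF x v)) \ (symmDiff x.2 (eF x v))) ↔
          (∃ w, s(u, w) ∈ x.1 \ x.2) := by
        rw [heeq]
        exact exists_congr fun w => (hreb w).2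
      by_cases hC : ∃ w, s(u, w) ∈ x.1 \ x.2
      · rw [pFrom, if_pos (hcond.mpr hC), pFrom, if_pos hC]
        simp only [heeq]
        exact hctx.pathP_stable₂ (hctx.pathP_avoid₂ hu)
      · rw [pFrom, if_neg (fun hc => hC (hcond.mp hc)), pFrom, if_neg hC]
        simp only [heeq]
        exact hctx.pathP_stable₁ (hctx.pathP_avoid₁ hu)
    · -- avoid
      intro u hu z hz
      rw [hPeq] at hu ⊢
      unfold pFrom at hz
      split_ifs at hz with hC
      · exact hctx.pathP_avoid₂ hu z hz
      · exact hctx.pathP_avoid₁ hu z hz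
    · -- after
      left
      rw [heeq]
      exact ⟨(hctx.covV₀).2, (hctx.covV₀).1⟩
    · -- covOut
      intro u hu
      rw [hPeq] at hu
      rw [heeq]
      exact ⟨(hctx.covNotP hu).2, (hctx.covNotP hu).1⟩

end Setting

/-- the noncrossing consequence of planarity for the quadruple -/
def NC (G : SimpleGraph V) (a b c d : V) : Prop :=
  ¬ ∃ (P : G.Walk a c) (Q : G.Walk b d), P.IsPath ∧ Q.IsPath ∧ WalkDisjoint P Q

structure Distinct (a b c d : V) : Prop where
  ab : a ≠ b
  ac : a ≠ c
  ad : a ≠ d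
  bc : b ≠ c
  bd : b ≠ d
  cd : c ≠ d

namespace Setting

variable {G : SimpleGraph V} {S : Finset V} {a b c d : V} {X₁ X₂ : Finset V}
  {x : Finset (Sym2 V) × Finset (Sym2 V)}

lemma nmem (h : Setting G S a b c d X₁ X₂ x) {u v : V}
    (hu : u ∈ ({a, b, c, d} : Finset V)) (hv : v ∈ ({a, b, c, d} : Finset V))
    (h1 : u ≠ v) (h2 : u ≠ epF x v) : u ∉ pFrom x v := by
  intro hmem
  have hco := (h.vf hv).interior u hmem h1 h2
  rcases (h.status hu).2 with ⟨_, _, _, hn⟩ | ⟨_, _, hn, _⟩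
  · exact hn hco.2
  · exact hn hco.1

lemma mem_abcd (h : Setting G S a b c d X₁ X₂ x) {z : V}
    (hz : z ∈ X₁ ∪ X₂ ∪ S) : z ∈ ({a, b, c, d} : Finset V) ∨ z ∈ S := by
  rcases mem_union.mp hz with h' | h'
  · exact Or.inl (h.part ▸ h')
  · exact Or.inr h'

lemma s_not_abcd (h : Setting G S a b c d X₁ X₂ x) {z : V} (hz : z ∈ S) :
    z ∉ ({a, b, c, d} : Finset V) :=
  fun hmem => Finset.disjoint_left.mp h.dS hmem hz

lemma ha' : a ∈ ({a, b, c, d} : Finset V) := by simp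
lemma hb' : b ∈ ({a, b, c, d} : Finset V) := by simp
lemma hc' : c ∈ ({a, b, c, d} : Finset V) := by simp
lemma hd' : d ∈ ({a, b, c, d} : Finset V) := by simp

/-- forbidden configuration : the path from `a` cannot end at `c`. -/
lemma not_ep_ac (h : Setting G S a b c d X₁ X₂ x) (h6 : Distinct a b c d)
    (hNC : NC G a b c d) (hAC : Separated G S a b c d) : epF x a ≠ c := by
  intro hyc
  have hva := h.vf (ha' (b := b) (c := c) (d := d))
  have hvb := h.vf (hb' (a := a) (c := c) (d := d))
  -- b is not on the path from a
  have hbPa : b ∉ pFrom x a := h.nmem hb' ha' h6.ab.symm (by rw [hyc]; exact h6.bc)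
  -- the endpoint of the path from b
  have havoid_b := hva.avoid b hbPa
  have hzPa : epF x b ∉ pFrom x a := havoid_b _ hvb.ep_mem
  have hz_ne_a : epF x b ≠ a := fun hc => hzPa (hc ▸ hva.v_mem)
  have hz_ne_c : epF x b ≠ c := fun hc => hzPa (by rw [hc, ← hyc]; exact hva.ep_mem)
  obtain ⟨Wa, hWa1, hWa2⟩ := hva.walk
  obtain ⟨Wb, hWb1, hWb2⟩ := hvb.walk
  have hdisj_ab : ∀ z ∈ pFrom x a, z ∉ pFrom x b :=
    fun z hz hz' => havoid_b z hz' hz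
  rcases h.mem_abcd hvb.classify with hz4 | hzS
  · -- endpoint of P_b is one of a b c d : must be d
    have hz_ne_b : epF x b ≠ b := hvb.ep_ne
    have hzd : epF x b = d := by
      simp only [mem_insert, mem_singleton] at hz4
      rcases hz4 with h' | h' | h' | h'
      · exact absurd h' hz_ne_a
      · exact absurd h' hz_ne_b
      · exact absurd h' hz_ne_c
      · exact h'
    exact hNC ⟨Wa.copy rfl hyc, Wb.copy rfl hzd,
      (by rwa [SimpleGraph.Walk.isPath_copy]), (by rwa [SimpleGraph.Walk.isPath_copy]), by
      intro z hz1 hz2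
      rw [SimpleGraph.Walk.support_copy, hWa2] at hz1
      rw [SimpleGraph.Walk.support_copy, hWb2] at hz2
      exact hdisj_ab z hz1 hz2⟩
  · -- endpoint of P_b is free : get a third path from d
    have hvd := h.vf (hd' (a := a) (b := b) (c := c))
    have hdPa : d ∉ pFrom x a := h.nmem hd' ha' h6.ad.symm (by rw [hyc]; exact h6.cd.symm)
    have hdPb : d ∉ pFrom x b := h.nmem hd' hb' h6.bd.symm
      (fun hc => (h.s_not_abcd (hc ▸ hzS)) hd')
    have havoid_d_a := hva.avoid d hdPa
    have havoid_d_b := hvb.avoid d hdPb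
    have huPa : epF x d ∉ pFrom x a := havoid_d_a _ hvd.ep_mem
    have huPb : epF x d ∉ pFrom x b := havoid_d_b _ hvd.ep_mem
    have hu_ne : epF x d ≠ d := hvd.ep_ne
    have huS : epF x d ∈ S := by
      rcases h.mem_abcd hvd.classify with hu4 | huS
      · exfalso
        simp only [mem_insert, mem_singleton] at hu4
        rcases hu4 with h' | h' | h' | h'
        · exact huPa (h' ▸ hva.v_mem)
        · exact huPb (h' ▸ hvb.v_mem)
        · exact huPa (by rw [h', ← hyc]; exact hva.ep_mem)
        · exact hu_ne h'
      · exact huS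
    have hut : epF x d ≠ epF x b := fun hc => huPb (hc ▸ hvb.ep_mem)
    obtain ⟨Wd, hWd1, hWd2⟩ := hvd.walk
    refine hAC ⟨epF x b, epF x d, Wa.copy rfl hyc, Wb, Wd, hzS, huS, hut.symm,
      (by rwa [SimpleGraph.Walk.isPath_copy]), hWb1, hWd1, ?_, ?_, ?_⟩
    · intro z hz1 hz2
      rw [SimpleGraph.Walk.support_copy, hWa2] at hz1
      rw [hWb2] at hz2
      exact hdisj_ab z hz1 hz2
    · intro z hz1 hz2
      rw [SimpleGraph.Walk.support_copy, hWa2] at hz1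
      rw [hWd2] at hz2
      exact havoid_d_a z hz2 hz1
    · intro z hz1 hz2
      rw [hWb2] at hz1
      rw [hWd2] at hz2
      exact havoid_d_b z hz2 hz1

/-- forbidden configuration : if the path from `a` ends free then the path from `b`
cannot end at `d`. -/
lemma not_ep_bd (h : Setting G S a b c d X₁ X₂ x) (h6 : Distinct a b c d)
    (hBD : Separated G S b c d a) (hSa : epF x a ∈ S) : epF x b ≠ d := by
  intro hyd
  have hva := h.vf (ha' (b := b) (c := c) (d := d))
  have hvb := h.vf (hb' (a := a) (c := c) (d := d))
  have hvc := h.vf (hc' (a := a) (b := b) (d := d))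
  have hbPa : b ∉ pFrom x a := h.nmem hb' ha' h6.ab.symm
    (fun hc => (h.s_not_abcd (hc ▸ hSa)) hb')
  have hcPa : c ∉ pFrom x a := h.nmem hc' ha' h6.ac.symm
    (fun hc => (h.s_not_abcd (hc ▸ hSa)) hc')
  have hcPb : c ∉ pFrom x b := h.nmem hc' hb' h6.bc.symm (by rw [hyd]; exact h6.cd)
  have havoid_b_a := hva.avoid b hbPa
  have havoid_c_a := hva.avoid c hcPa
  have havoid_c_b := hvb.avoid c hcPb
  -- endpoint of the path from c
  have htPa : epF x c ∉ pFrom x a := havoid_c_a _ hvc.ep_mem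
  have htPb : epF x c ∉ pFrom x b := havoid_c_b _ hvc.ep_mem
  have htS : epF x c ∈ S := by
    rcases h.mem_abcd hvc.classify with ht4 | htS
    · exfalso
      simp only [mem_insert, mem_singleton] at ht4
      rcases ht4 with h' | h' | h' | h'
      · exact htPa (h' ▸ hva.v_mem)
      · exact htPb (h' ▸ hvb.v_mem)
      · exact hvc.ep_ne h'
      · exact htPb (by rw [h', ← hyd]; exact hvb.ep_mem)
    · exact htS
  have hts : epF x c ≠ epF x a := fun hc => htPa (hc ▸ hva.ep_mem)
  obtain ⟨Wa, hWa1, hWa2⟩ := hva.walk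
  obtain ⟨Wb, hWb1, hWb2⟩ := hvb.walk
  obtain ⟨Wc, hWc1, hWc2⟩ := hvc.walk
  refine hBD ⟨epF x c, epF x a, Wb.copy rfl hyd, Wc, Wa, htS, hSa, hts, ?_, hWc1, hWa1,
    ?_, ?_, ?_⟩
  · rwa [SimpleGraph.Walk.isPath_copy]
  · intro z hz1 hz2
    rw [SimpleGraph.Walk.support_copy, hWb2] at hz1
    rw [hWc2] at hz2
    exact havoid_c_b z hz2 hz1
  · intro z hz1 hz2
    rw [SimpleGraph.Walk.support_copy, hWb2] at hz1
    rw [hWa2] at hz2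
    exact havoid_b_a z hz1 hz2
  · intro z hz1 hz2
    rw [hWc2] at hz1
    rw [hWa2] at hz2
    exact havoid_c_a z hz1 hz2

end Setting

lemma part_swap {T X₁ X₂ D₀ : Finset V} (hpart : X₁ ∪ X₂ = T) (hdisj : Disjoint X₁ X₂)
    (hD : ∀ t ∈ D₀, t ∈ X₁ ∪ X₂) :
    (symmDiff X₁ D₀) ∪ (symmDiff X₂ D₀) = T ∧
      Disjoint (symmDiff X₁ D₀) (symmDiff X₂ D₀) := by
  have hx : ∀ t, ¬ (t ∈ X₁ ∧ t ∈ X₂) := by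
    intro t ⟨h1, h2⟩
    exact Finset.disjoint_left.mp hdisj h1 h2
  constructor
  · rw [← hpart]
    ext z
    simp only [mem_union, Finset.mem_symmDiff]
    constructor
    · rintro ((⟨h1, _⟩ | ⟨h1, _⟩) | (⟨h1, _⟩ | ⟨h1, _⟩))
      · exact Or.inl h1
      · exact mem_union.mp (hD z h1)
      · exact Or.inr h1
      · exact mem_union.mp (hD z h1)
    · intro hz
      by_cases hd : z ∈ D₀
      · rcases hz with h1 | h2
        · exact Or.inr (Or.inr ⟨hd, fun hc => hx z ⟨h1, hc⟩⟩)
        · exact Or.inl (Or.inr ⟨hd, fun hc => hx z ⟨hc, h2⟩⟩)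
      · rcases hz with h1 | h2
        · exact Or.inl (Or.inl ⟨h1, hd⟩)
        · exact Or.inr (Or.inl ⟨h2, hd⟩)
  · rw [Finset.disjoint_left]
    intro z hz1 hz2
    rcases Finset.mem_symmDiff.mp hz1 with ⟨h1, h2⟩ | ⟨h1, h2⟩ <;>
      rcases Finset.mem_symmDiff.mp hz2 with ⟨h3, h4⟩ | ⟨h3, h4⟩
    · exact hx z ⟨h1, h3⟩
    · exact h2 h3
    · exact h4 h1
    · rcases mem_union.mp (hD z h1) with h' | h'
      · exact h2 h'
      · exact h4 h'

namespace Setting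

variable {G : SimpleGraph V} {S : Finset V} {a b c d : V} {X₁ X₂ : Finset V}
  {x : Finset (Sym2 V) × Finset (Sym2 V)}

lemma swapSetting (h : Setting G S a b c d X₁ X₂ x) {v : V}
    (hv : v ∈ ({a, b, c, d} : Finset V)) :
    Setting G S a b c d (symmDiff X₁ (insert v ({epF x v} \ S)))
      (symmDiff X₂ (insert v ({epF x v} \ S)))
      (symmDiff x.1 (eF x v), symmDiff x.2 (eF x v)) := by
  have hvf := h.vf hv
  have hD : ∀ t ∈ insert v ({epF x v} \ S), t ∈ X₁ ∪ X₂ := by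
    intro t ht
    rcases mem_insert.mp ht with rfl | ht'
    · rcases (h.status hv).2 with ⟨h1, _, _, _⟩ | ⟨h1, _, _, _⟩
      · exact mem_union.mpr (Or.inr h1)
      · exact mem_union.mpr (Or.inl h1)
    · rw [mem_sdiff, mem_singleton] at ht'
      obtain ⟨rfl, htS⟩ := ht'
      rcases mem_union.mp hvf.classify with h' | h'
      · exact h'
      · exact absurd h' htS
  obtain ⟨hpart', hdisj'⟩ := part_swap h.part h.disj hD
  exact ⟨hvf.good₁, hvf.good₂, hpart', hdisj', h.dS⟩

end Setting

/-- the condensation involution -/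
noncomputable def phi (a b c d : V) (x : Finset (Sym2 V) × Finset (Sym2 V)) :
    Finset (Sym2 V) × Finset (Sym2 V) :=
  if epF x a = b ∨ epF x a = d then
    (symmDiff x.1 (eF x a), symmDiff x.2 (eF x a))
  else if epF x b = c then
    (symmDiff x.2 (eF x b), symmDiff x.1 (eF x b))
  else if epF x c = d then
    (symmDiff x.2 (eF x c), symmDiff x.1 (eF x c))
  else
    (symmDiff x.1 (symmDiff (eF x a) (eF x b)), symmDiff x.2 (symmDiff (eF x a) (eF x b)))

namespace Setting

variable {G : SimpleGraph V} {S : Finset V} {a b c d : V} {X₁ X₂ : Finset V}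
  {x : Finset (Sym2 V) × Finset (Sym2 V)}

lemma swapPair (h : Setting G S a b c d X₁ X₂ x) :
    Setting G S a b c d X₂ X₁ (x.2, x.1) :=
  ⟨h.g₂, h.g₁, by rw [union_comm]; exact h.part, h.disj.symm, h.dS⟩

lemma notS (h : Setting G S a b c d X₁ X₂ x) {v : V}
    (hv : v ∈ ({a, b, c, d} : Finset V)) : v ∉ S :=
  Finset.disjoint_left.mp h.dS hv

lemma sd_single (h : Setting G S a b c d X₁ X₂ x) {v y : V} (hy : y ∉ S) :
    insert v ({y} \ S) = ({v, y} : Finset V) := by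
  ext z
  simp only [mem_insert, mem_sdiff, mem_singleton]
  constructor
  · rintro (rfl | ⟨rfl, _⟩)
    · exact Or.inl rfl
    · exact Or.inr rfl
  · rintro (rfl | rfl)
    · exact Or.inl rfl
    · exact Or.inr ⟨rfl, hy⟩

lemma sd_empty (h : Setting G S a b c d X₁ X₂ x) {v y : V} (hy : y ∈ S) :
    insert v ({y} \ S) = ({v} : Finset V) := by
  ext z
  simp only [mem_insert, mem_sdiff, mem_singleton]
  constructor
  · rintro (rfl | ⟨rfl, hz⟩)
    · exact rfl
    · exact absurd hy hz
  · rintro rfl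
    exact Or.inl rfl

theorem phi_spec {R : Type*} [CommRing R] (w : Sym2 V → R)
    (h : Setting G S a b c d X₁ X₂ x) (h6 : Distinct a b c d)
    (hNC : NC G a b c d) (hAC : Separated G S a b c d) (hBD : Separated G S b c d a) :
    ∃ X₁' X₂' : Finset V,
      Setting G S a b c d X₁' X₂' (phi a b c d x) ∧
      phi a b c d (phi a b c d x) = x ∧
      ((∏ e ∈ (phi a b c d x).1, w e) * ∏ e ∈ (phi a b c d x).2, w e
        = (∏ e ∈ x.1, w e) * ∏ e ∈ x.2, w e) ∧
      ((X₁' = symmDiff X₁ {a, b} ∧ X₂' = symmDiff X₂ {a, b}) ∨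
       (X₁' = symmDiff X₁ {a, d} ∧ X₂' = symmDiff X₂ {a, d}) ∨
       (X₁' = symmDiff X₂ {b, c} ∧ X₂' = symmDiff X₁ {b, c}) ∨
       (X₁' = symmDiff X₂ {c, d} ∧ X₂' = symmDiff X₁ {c, d})) := by
  have hva := h.vf (ha' (a := a) (b := b) (c := c) (d := d))
  have hvb := h.vf (hb' (a := a) (b := b) (c := c) (d := d))
  have hvc := h.vf (hc' (a := a) (b := b) (c := c) (d := d))
  by_cases hB1 : epF x a = b ∨ epF x a = d
  · -- swap the path from a
    have hyS : epF x a ∉ S := by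
      rcases hB1 with h' | h' <;> rw [h']
      · exact h.notS hb'
      · exact h.notS hd'
    have hphi : phi a b c d x =
        (symmDiff x.1 (eF x a), symmDiff x.2 (eF x a)) := by
      unfold phi; rw [if_pos hB1]
    have hsets := h.swapSetting (ha' (a := a) (b := b) (c := c) (d := d))
    rw [h.sd_single hyS] at hsets
    have hinv : phi a b c d (phi a b c d x) = x := by
      rw [hphi]
      have hcond : epF (symmDiff x.1 (eF x a), symmDiff x.2 (eF x a)) a = b ∨
          epF (symmDiff x.1 (eF x a), symmDiff x.2 (eF x a)) a = d := by
        rw [epF_congr hva.back]; exact hB1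
      unfold phi
      rw [if_pos hcond, eF_congr hva.back]
      simp only [symmDiff_symmDiff_cancel_right]
    have hwt : (∏ e ∈ (phi a b c d x).1, w e) * ∏ e ∈ (phi a b c d x).2, w e
        = (∏ e ∈ x.1, w e) * ∏ e ∈ x.2, w e := by
      rw [hphi]
      exact prod_swap_pair w hva.esub
    refine ⟨symmDiff X₁ {a, epF x a}, symmDiff X₂ {a, epF x a}, by rw [hphi]; exact hsets,
      hinv, hwt, ?_⟩
    rcases hB1 with h' | h'
    · exact Or.inl ⟨by rw [h'], by rw [h']⟩
    · exact Or.inr (Or.inl ⟨by rw [h'], by rw [h']⟩)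
  · -- the path from a ends at a free vertex
    push_neg at hB1
    have hSa : epF x a ∈ S := by
      rcases h.mem_abcd hva.classify with h4 | hS
      · exfalso
        simp only [mem_insert, mem_singleton] at h4
        rcases h4 with h' | h' | h' | h'
        · exact hva.ep_ne h'
        · exact hB1.1 h'
        · exact h.not_ep_ac h6 hNC hAC h'
        · exact hB1.2 h'
      · exact hS
    have hbPa : b ∉ pFrom x a := h.nmem hb' ha' h6.ab.symm
      (fun hc => h.notS hb' (by rw [hc]; exact hSa))
    have havoid_ba := hva.avoid b hbPa
    have haPb : a ∉ pFrom x b := fun hmem => havoid_ba a hmem hva.v_mem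
    have hnotB1 : ¬ (epF x a = b ∨ epF x a = d) := not_or.mpr ⟨hB1.1, hB1.2⟩
    have hstata := (h.status (ha' (a := a) (b := b) (c := c) (d := d))).2
    have hstata' : (cov x.1 a ∧ ¬ cov x.2 a) ∨ (¬ cov x.1 a ∧ cov x.2 a) := by
      rcases hstata with ⟨_, _, h1, h2⟩ | ⟨_, _, h1, h2⟩
      · exact Or.inl ⟨h1, h2⟩
      · exact Or.inr ⟨h1, h2⟩
    by_cases hB2 : epF x b = c
    · -- swap the path from b, components get exchanged
      have hyS2 : epF x b ∉ S := by rw [hB2]; exact h.notS hc'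
      have hphi : phi a b c d x =
          (symmDiff x.2 (eF x b), symmDiff x.1 (eF x b)) := by
        unfold phi; rw [if_neg hnotB1, if_pos hB2]
      have hsets0 := h.swapSetting (hb' (a := a) (b := b) (c := c) (d := d))
      rw [h.sd_single hyS2] at hsets0
      have hsets := hsets0.swapPair
      -- facts about the swapped pair
      have hcovA := hvb.covOut a haPb
      have hcA : (cov (symmDiff x.1 (eF x b)) a ∧ ¬ cov (symmDiff x.2 (eF x b)) a) ∨
          (¬ cov (symmDiff x.1 (eF x b)) a ∧ cov (symmDiff x.2 (eF x b)) a) := by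
        rcases hstata' with ⟨h1, h2⟩ | ⟨h1, h2⟩
        · exact Or.inl ⟨hcovA.1.mpr h1, fun hc => h2 (hcovA.2.mp hc)⟩
        · exact Or.inr ⟨fun hc => h1 (hcovA.1.mp hc), hcovA.2.mpr h2⟩
      have hqa : pFrom (symmDiff x.2 (eF x b), symmDiff x.1 (eF x b)) a = pFrom x a := by
        have h1 : pFrom (symmDiff x.2 (eF x b), symmDiff x.1 (eF x b)) a
            = pFrom (symmDiff x.1 (eF x b), symmDiff x.2 (eF x b)) a :=
          pFrom_swap (x := (symmDiff x.1 (eF x b), symmDiff x.2 (eF x b))) hcA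
        rw [h1, hvb.stable a haPb]
      have hqb : pFrom (symmDiff x.2 (eF x b), symmDiff x.1 (eF x b)) b = pFrom x b := by
        have h1 : pFrom (symmDiff x.2 (eF x b), symmDiff x.1 (eF x b)) b
            = pFrom (symmDiff x.1 (eF x b), symmDiff x.2 (eF x b)) b :=
          pFrom_swap (x := (symmDiff x.1 (eF x b), symmDiff x.2 (eF x b))) hvb.after
        rw [h1, hvb.back]
      have hinv : phi a b c d (phi a b c d x) = x := by
        rw [hphi]
        have hcond1 : ¬ (epF (symmDiff x.2 (eF x b), symmDiff x.1 (eF x b)) a = b ∨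
            epF (symmDiff x.2 (eF x b), symmDiff x.1 (eF x b)) a = d) := by
          rw [epF_congr hqa]
          rintro (h' | h')
          · exact h.notS hb' (by rw [← h']; exact hSa)
          · exact h.notS hd' (by rw [← h']; exact hSa)
        have hcond2 : epF (symmDiff x.2 (eF x b), symmDiff x.1 (eF x b)) b = c := by
          rw [epF_congr hqb]; exact hB2
        unfold phi
        rw [if_neg hcond1, if_pos hcond2, eF_congr hqb]
        simp only [symmDiff_symmDiff_cancel_right]
      have hwt : (∏ e ∈ (phi a b c d x).1, w e) * ∏ e ∈ (phi a b c d x).2, w e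
          = (∏ e ∈ x.1, w e) * ∏ e ∈ x.2, w e := by
        rw [hphi]
        rw [mul_comm]
        exact prod_swap_pair w hvb.esub
      refine ⟨symmDiff X₂ {b, epF x b}, symmDiff X₁ {b, epF x b},
        by rw [hphi]; exact hsets, hinv, hwt,
        Or.inr (Or.inr (Or.inl ⟨by rw [hB2], by rw [hB2]⟩))⟩
    · -- the path from b also ends free
      have hSb : epF x b ∈ S := by
        rcases h.mem_abcd hvb.classify with h4 | hS
        · exfalso
          simp only [mem_insert, mem_singleton] at h4
          rcases h4 with h' | h' | h' | h'
          · exact haPb (h' ▸ hvb.ep_mem)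
          · exact hvb.ep_ne h'
          · exact hB2 h'
          · exact h.not_ep_bd h6 hBD hSa h'
        · exact hS
      have hcPa : c ∉ pFrom x a := h.nmem hc' ha' h6.ac.symm
        (fun hc => h.notS hc' (by rw [hc]; exact hSa))
      have hcPb : c ∉ pFrom x b := h.nmem hc' hb' h6.bc.symm
        (fun hc => h.notS hc' (by rw [hc]; exact hSb))
      have havoid_ca := hva.avoid c hcPa
      have havoid_cb := hvb.avoid c hcPb
      by_cases hB3 : epF x c = d
      · -- swap the path from c, components get exchanged
        have hyS3 : epF x c ∉ S := by rw [hB3]; exact h.notS hd'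
        have hphi : phi a b c d x =
            (symmDiff x.2 (eF x c), symmDiff x.1 (eF x c)) := by
          unfold phi; rw [if_neg hnotB1, if_neg hB2, if_pos hB3]
        have hsets0 := h.swapSetting (hc' (a := a) (b := b) (c := c) (d := d))
        rw [h.sd_single hyS3] at hsets0
        have hsets := hsets0.swapPair
        have haPc : a ∉ pFrom x c := h.nmem ha' hc' h6.ac
          (by rw [hB3]; exact h6.ad)
        have hbPc : b ∉ pFrom x c := h.nmem hb' hc' h6.bc
          (by rw [hB3]; exact h6.bd)
        have hstatb := (h.status (hb' (a := a) (b := b) (c := c) (d := d))).2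
        have hstatb' : (cov x.1 b ∧ ¬ cov x.2 b) ∨ (¬ cov x.1 b ∧ cov x.2 b) := by
          rcases hstatb with ⟨_, _, h1, h2⟩ | ⟨_, _, h1, h2⟩
          · exact Or.inl ⟨h1, h2⟩
          · exact Or.inr ⟨h1, h2⟩
        have hcovA := hvc.covOut a haPc
        have hcA : (cov (symmDiff x.1 (eF x c)) a ∧ ¬ cov (symmDiff x.2 (eF x c)) a) ∨
            (¬ cov (symmDiff x.1 (eF x c)) a ∧ cov (symmDiff x.2 (eF x c)) a) := by
          rcases hstata' with ⟨h1, h2⟩ | ⟨h1, h2⟩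
          · exact Or.inl ⟨hcovA.1.mpr h1, fun hc => h2 (hcovA.2.mp hc)⟩
          · exact Or.inr ⟨fun hc => h1 (hcovA.1.mp hc), hcovA.2.mpr h2⟩
        have hcovB := hvc.covOut b hbPc
        have hcB : (cov (symmDiff x.1 (eF x c)) b ∧ ¬ cov (symmDiff x.2 (eF x c)) b) ∨
            (¬ cov (symmDiff x.1 (eF x c)) b ∧ cov (symmDiff x.2 (eF x c)) b) := by
          rcases hstatb' with ⟨h1, h2⟩ | ⟨h1, h2⟩
          · exact Or.inl ⟨hcovB.1.mpr h1, fun hc => h2 (hcovB.2.mp hc)⟩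
          · exact Or.inr ⟨fun hc => h1 (hcovB.1.mp hc), hcovB.2.mpr h2⟩
        have hqa : pFrom (symmDiff x.2 (eF x c), symmDiff x.1 (eF x c)) a = pFrom x a := by
          have h1 : pFrom (symmDiff x.2 (eF x c), symmDiff x.1 (eF x c)) a
              = pFrom (symmDiff x.1 (eF x c), symmDiff x.2 (eF x c)) a :=
            pFrom_swap (x := (symmDiff x.1 (eF x c), symmDiff x.2 (eF x c))) hcA
          rw [h1, hvc.stable a haPc]
        have hqb : pFrom (symmDiff x.2 (eF x c), symmDiff x.1 (eF x c)) b = pFrom x b := by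
          have h1 : pFrom (symmDiff x.2 (eF x c), symmDiff x.1 (eF x c)) b
              = pFrom (symmDiff x.1 (eF x c), symmDiff x.2 (eF x c)) b :=
            pFrom_swap (x := (symmDiff x.1 (eF x c), symmDiff x.2 (eF x c))) hcB
          rw [h1, hvc.stable b hbPc]
        have hqc : pFrom (symmDiff x.2 (eF x c), symmDiff x.1 (eF x c)) c = pFrom x c := by
          have h1 : pFrom (symmDiff x.2 (eF x c), symmDiff x.1 (eF x c)) c
              = pFrom (symmDiff x.1 (eF x c), symmDiff x.2 (eF x c)) c :=
            pFrom_swap (x := (symmDiff x.1 (eF x c), symmDiff x.2 (eF x c))) hvc.after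
          rw [h1, hvc.back]
        have hinv : phi a b c d (phi a b c d x) = x := by
          rw [hphi]
          have hcond1 : ¬ (epF (symmDiff x.2 (eF x c), symmDiff x.1 (eF x c)) a = b ∨
              epF (symmDiff x.2 (eF x c), symmDiff x.1 (eF x c)) a = d) := by
            rw [epF_congr hqa]
            rintro (h' | h')
            · exact h.notS hb' (by rw [← h']; exact hSa)
            · exact h.notS hd' (by rw [← h']; exact hSa)
          have hcond2 : ¬ epF (symmDiff x.2 (eF x c), symmDiff x.1 (eF x c)) b = c := by
            rw [epF_congr hqb]; exact hB2
          have hcond3 : epF (symmDiff x.2 (eF x c), symmDiff x.1 (eF x c)) c = d := by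
            rw [epF_congr hqc]; exact hB3
          unfold phi
          rw [if_neg hcond1, if_neg hcond2, if_pos hcond3, eF_congr hqc]
          simp only [symmDiff_symmDiff_cancel_right]
        have hwt : (∏ e ∈ (phi a b c d x).1, w e) * ∏ e ∈ (phi a b c d x).2, w e
            = (∏ e ∈ x.1, w e) * ∏ e ∈ x.2, w e := by
          rw [hphi]
          rw [mul_comm]
          exact prod_swap_pair w hvc.esub
        refine ⟨symmDiff X₂ {c, epF x c}, symmDiff X₁ {c, epF x c},
          by rw [hphi]; exact hsets, hinv, hwt,
          Or.inr (Or.inr (Or.inr ⟨by rw [hB3], by rw [hB3]⟩))⟩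
      · -- all three paths end free : swap both the a-path and the b-path
        have hSc : epF x c ∈ S := by
          rcases h.mem_abcd hvc.classify with h4 | hS
          · exfalso
            simp only [mem_insert, mem_singleton] at h4
            rcases h4 with h' | h' | h' | h'
            · exact (havoid_ca (epF x c) hvc.ep_mem) (h' ▸ hva.v_mem)
            · exact (havoid_cb (epF x c) hvc.ep_mem) (h' ▸ hvb.v_mem)
            · exact hvc.ep_ne h'
            · exact hB3 h'
          · exact hS
        have hsets1 := h.swapSetting (ha' (a := a) (b := b) (c := c) (d := d))
        rw [h.sd_empty hSa] at hsets1
        have hb1 : pFrom (symmDiff x.1 (eF x a), symmDiff x.2 (eF x a)) b = pFrom x b :=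
          hva.stable b hbPa
        have hvb1 := hsets1.vf (hb' (a := a) (b := b) (c := c) (d := d))
        have heb1 : eF (symmDiff x.1 (eF x a), symmDiff x.2 (eF x a)) b = eF x b :=
          eF_congr hb1
        have hyb1 : epF (symmDiff x.1 (eF x a), symmDiff x.2 (eF x a)) b = epF x b :=
          epF_congr hb1
        have hphi : phi a b c d x =
            (symmDiff x.1 (symmDiff (eF x a) (eF x b)),
             symmDiff x.2 (symmDiff (eF x a) (eF x b))) := by
          unfold phi; rw [if_neg hnotB1, if_neg hB2, if_neg hB3]
        have hphi' : phi a b c d x =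
            (symmDiff (symmDiff x.1 (eF x a))
              (eF (symmDiff x.1 (eF x a), symmDiff x.2 (eF x a)) b),
             symmDiff (symmDiff x.2 (eF x a))
              (eF (symmDiff x.1 (eF x a), symmDiff x.2 (eF x a)) b)) := by
          rw [hphi, heb1, symmDiff_assoc, symmDiff_assoc]
        have hsets2 := hsets1.swapSetting (hb' (a := a) (b := b) (c := c) (d := d))
        rw [hsets1.sd_empty (by rw [hyb1]; exact hSb)] at hsets2
        have hXmerge : ∀ Y : Finset V, symmDiff (symmDiff Y {a}) {b} = symmDiff Y {a, b} := by
          intro Y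
          rw [symmDiff_assoc]
          congr 1
          rw [Disjoint.symmDiff_eq_sup (Finset.disjoint_singleton.mpr h6.ab), sup_eq_union]
          ext z
          simp
        rw [hXmerge X₁, hXmerge X₂] at hsets2
        -- involution data
        have haPb1 : a ∉ pFrom (symmDiff x.1 (eF x a), symmDiff x.2 (eF x a)) b := by
          rw [hb1]; exact haPb
        have hcPb1 : c ∉ pFrom (symmDiff x.1 (eF x a), symmDiff x.2 (eF x a)) b := by
          rw [hb1]; exact hcPb
        have hqa : pFrom (phi a b c d x) a = pFrom x a := by
          rw [hphi']
          rw [hvb1.stable a haPb1]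
          exact hva.back
        have hqb : pFrom (phi a b c d x) b = pFrom x b := by
          rw [hphi']
          rw [hvb1.back]
          exact hb1
        have hqc : pFrom (phi a b c d x) c = pFrom x c := by
          rw [hphi']
          rw [hvb1.stable c hcPb1]
          exact hva.stable c hcPa
        have hinv : phi a b c d (phi a b c d x) = x := by
          have hcond1 : ¬ (epF (phi a b c d x) a = b ∨ epF (phi a b c d x) a = d) := by
            rw [epF_congr hqa]
            rintro (h' | h')
            · exact h.notS hb' (by rw [← h']; exact hSa)
            · exact h.notS hd' (by rw [← h']; exact hSa)
          have hcond2 : ¬ epF (phi a b c d x) b = c := by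
            rw [epF_congr hqb]; exact hB2
          have hcond3 : ¬ epF (phi a b c d x) c = d := by
            rw [epF_congr hqc]; exact hB3
          conv_lhs => rw [phi]
          rw [if_neg hcond1, if_neg hcond2, if_neg hcond3,
            eF_congr hqa, eF_congr hqb, hphi]
          simp only [symmDiff_symmDiff_cancel_right]
        have hwt : (∏ e ∈ (phi a b c d x).1, w e) * ∏ e ∈ (phi a b c d x).2, w e
            = (∏ e ∈ x.1, w e) * ∏ e ∈ x.2, w e := by
          rw [hphi']
          rw [prod_swap_pair w hvb1.esub]
          exact prod_swap_pair w hva.esub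
        refine ⟨symmDiff X₁ {a, b}, symmDiff X₂ {a, b}, ?_, hinv, hwt,
          Or.inl ⟨rfl, rfl⟩⟩
        rw [hphi']
        exact hsets2

end Setting

/-! ## final assembly -/

lemma good_iff {G : SimpleGraph V} {S X : Finset V} {M : Finset (Sym2 V)} :
    (IsMatchingOn G (Finset.univ \ X) M ∧ ∀ v ∈ Finset.univ \ X, v ∉ S → ∃ e ∈ M, v ∈ e)
    ↔ GoodP G S X M := by
  unfold IsMatchingOn GoodP MatG PD cov
  constructor
  · rintro ⟨⟨h1, h2, h3⟩, h4⟩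
    refine ⟨⟨h1, h3⟩, ?_, ?_⟩
    · rintro v ⟨e, he, hv⟩ hvX
      have := h2 e he v hv
      rw [mem_sdiff] at this
      exact this.2 hvX
    · intro v hv hvS
      exact h4 v (mem_sdiff.mpr ⟨mem_univ v, hv⟩) hvS
  · rintro ⟨⟨h1, h3⟩, h2, h4⟩
    refine ⟨⟨h1, ?_, h3⟩, ?_⟩
    · intro e he v hv
      rw [mem_sdiff]
      exact ⟨mem_univ v, h2 v ⟨e, he, hv⟩⟩
    · intro v hv hvS
      exact h4 v (mem_sdiff.mp hv).2 hvS

noncomputable def TT (G : SimpleGraph V) (S X₁ X₂ : Finset V) :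
    Finset ((Finset (Sym2 V)) × (Finset (Sym2 V))) :=
  (Finset.univ.filter (GoodP G S X₁)) ×ˢ (Finset.univ.filter (GoodP G S X₂))

lemma mem_TT {G : SimpleGraph V} {S X₁ X₂ : Finset V}
    {p : (Finset (Sym2 V)) × (Finset (Sym2 V))} :
    p ∈ TT G S X₁ X₂ ↔ GoodP G S X₁ p.1 ∧ GoodP G S X₂ p.2 := by
  unfold TT
  rw [Finset.mem_product, mem_filter, mem_filter]
  simp

lemma Setting.memTT {G : SimpleGraph V} {S : Finset V} {a b c d : V} {X₁ X₂ : Finset V}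
    {x : Finset (Sym2 V) × Finset (Sym2 V)} (h : Setting G S a b c d X₁ X₂ x) :
    x ∈ TT G S X₁ X₂ :=
  mem_TT.mpr ⟨h.g₁, h.g₂⟩

lemma Mf_mul {R : Type*} [CommRing R] (G : SimpleGraph V) (w : Sym2 V → R)
    (S X₁ X₂ : Finset V) :
    Mf G w S (Finset.univ \ X₁) * Mf G w S (Finset.univ \ X₂) =
      ∑ p ∈ TT G S X₁ X₂, (∏ e ∈ p.1, w e) * ∏ e ∈ p.2, w e := by
  unfold Mf TT
  rw [Finset.sum_mul_sum, ← Finset.sum_product']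
  have h1 : ∀ X : Finset V, (Finset.univ.filter
      (fun M : Finset (Sym2 V) =>
        IsMatchingOn G (Finset.univ \ X) M ∧ ∀ v ∈ Finset.univ \ X, v ∉ S → ∃ e ∈ M, v ∈ e))
      = Finset.univ.filter (GoodP G S X) := by
    intro X
    apply Finset.filter_congr
    intro M _
    exact good_iff
  rw [h1, h1]

lemma faceDistinct {G : SimpleGraph V} {L : List V} {a b c d : V}
    (hface : FaceConfig G L a b c d) : Distinct a b c d := by
  obtain ⟨L', hrot, i, j, k, l, hij, hjk, hkl, hi, hj, hk, hl⟩ := hface.cyclic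
  have hnd : L'.Nodup := (hrot.nodup_iff).mp hface.nodup
  have key : ∀ (p q : Fin L'.length), p ≠ q → L'.get p ≠ L'.get q := by
    intro p q hpq hc
    exact hpq (hnd.get_inj_iff.mp hc)
  exact ⟨hi ▸ hj ▸ key i j hij.ne, hi ▸ hk ▸ key i k (hij.trans hjk).ne,
    hi ▸ hl ▸ key i l ((hij.trans hjk).trans hkl).ne,
    hj ▸ hk ▸ key j k hjk.ne, hj ▸ hl ▸ key j l (hjk.trans hkl).ne,
    hk ▸ hl ▸ key k l hkl.ne⟩

lemma faceNC {G : SimpleGraph V} {L : List V} {a b c d : V}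
    (hface : FaceConfig G L a b c d) : NC G a b c d := by
  obtain ⟨L', hrot, i, j, k, l, hij, hjk, hkl, hi, hj, hk, hl⟩ := hface.cyclic
  rintro ⟨P, Q, h1, h2, h3⟩
  refine hface.noncrossing L' hrot i j k l hij hjk hkl
    ⟨P.copy hi.symm hk.symm, Q.copy hj.symm hl.symm, ?_, ?_, ?_⟩
  · rwa [SimpleGraph.Walk.isPath_copy]
  · rwa [SimpleGraph.Walk.isPath_copy]
  · intro z hz1 hz2
    rw [SimpleGraph.Walk.support_copy] at hz1 hz2
    exact h3 z hz1 hz2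

lemma sdid_b_ab {a b c d : V} (h6 : Distinct a b c d) :
    symmDiff ({b} : Finset V) {a, b} = {a} := by
  ext z
  have pab : z = a → z = b → False := fun p q => h6.ab (p.symm.trans q)
  have pac : z = a → z = c → False := fun p q => h6.ac (p.symm.trans q)
  have pad : z = a → z = d → False := fun p q => h6.ad (p.symm.trans q)
  have pbc : z = b → z = c → False := fun p q => h6.bc (p.symm.trans q)
  have pbd : z = b → z = d → False := fun p q => h6.bd (p.symm.trans q)
  have pcd : z = c → z = d → False := fun p q => h6.cd (p.symm.trans q)
  simp only [Finset.mem_symmDiff, mem_insert, mem_singleton]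
  tauto

lemma sdid_acd_ab {a b c d : V} (h6 : Distinct a b c d) :
    symmDiff ({a, c, d} : Finset V) {a, b} = {b, c, d} := by
  ext z
  have pab : z = a → z = b → False := fun p q => h6.ab (p.symm.trans q)
  have pac : z = a → z = c → False := fun p q => h6.ac (p.symm.trans q)
  have pad : z = a → z = d → False := fun p q => h6.ad (p.symm.trans q)
  have pbc : z = b → z = c → False := fun p q => h6.bc (p.symm.trans q)
  have pbd : z = b → z = d → False := fun p q => h6.bd (p.symm.trans q)
  have pcd : z = c → z = d → False := fun p q => h6.cd (p.symm.trans q)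
  simp only [Finset.mem_symmDiff, mem_insert, mem_singleton]
  tauto

lemma sdid_b_ad {a b c d : V} (h6 : Distinct a b c d) :
    symmDiff ({b} : Finset V) {a, d} = {a, b, d} := by
  ext z
  have pab : z = a → z = b → False := fun p q => h6.ab (p.symm.trans q)
  have pac : z = a → z = c → False := fun p q => h6.ac (p.symm.trans q)
  have pad : z = a → z = d → False := fun p q => h6.ad (p.symm.trans q)
  have pbc : z = b → z = c → False := fun p q => h6.bc (p.symm.trans q)
  have pbd : z = b → z = d → False := fun p q => h6.bd (p.symm.trans q)
  have pcd : z = c → z = d → False := fun p q => h6.cd (p.symm.trans q)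
  simp only [Finset.mem_symmDiff, mem_insert, mem_singleton]
  tauto

lemma sdid_acd_ad {a b c d : V} (h6 : Distinct a b c d) :
    symmDiff ({a, c, d} : Finset V) {a, d} = {c} := by
  ext z
  have pab : z = a → z = b → False := fun p q => h6.ab (p.symm.trans q)
  have pac : z = a → z = c → False := fun p q => h6.ac (p.symm.trans q)
  have pad : z = a → z = d → False := fun p q => h6.ad (p.symm.trans q)
  have pbc : z = b → z = c → False := fun p q => h6.bc (p.symm.trans q)
  have pbd : z = b → z = d → False := fun p q => h6.bd (p.symm.trans q)
  have pcd : z = c → z = d → False := fun p q => h6.cd (p.symm.trans q)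
  simp only [Finset.mem_symmDiff, mem_insert, mem_singleton]
  tauto

lemma sdid_acd_bc {a b c d : V} (h6 : Distinct a b c d) :
    symmDiff ({a, c, d} : Finset V) {b, c} = {a, b, d} := by
  ext z
  have pab : z = a → z = b → False := fun p q => h6.ab (p.symm.trans q)
  have pac : z = a → z = c → False := fun p q => h6.ac (p.symm.trans q)
  have pad : z = a → z = d → False := fun p q => h6.ad (p.symm.trans q)
  have pbc : z = b → z = c → False := fun p q => h6.bc (p.symm.trans q)
  have pbd : z = b → z = d → False := fun p q => h6.bd (p.symm.trans q)
  have pcd : z = c → z = d → False := fun p q => h6.cd (p.symm.trans q)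
  simp only [Finset.mem_symmDiff, mem_insert, mem_singleton]
  tauto

lemma sdid_b_bc {a b c d : V} (h6 : Distinct a b c d) :
    symmDiff ({b} : Finset V) {b, c} = {c} := by
  ext z
  have pab : z = a → z = b → False := fun p q => h6.ab (p.symm.trans q)
  have pac : z = a → z = c → False := fun p q => h6.ac (p.symm.trans q)
  have pad : z = a → z = d → False := fun p q => h6.ad (p.symm.trans q)
  have pbc : z = b → z = c → False := fun p q => h6.bc (p.symm.trans q)
  have pbd : z = b → z = d → False := fun p q => h6.bd (p.symm.trans q)
  have pcd : z = c → z = d → False := fun p q => h6.cd (p.symm.trans q)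
  simp only [Finset.mem_symmDiff, mem_insert, mem_singleton]
  tauto

lemma sdid_acd_cd {a b c d : V} (h6 : Distinct a b c d) :
    symmDiff ({a, c, d} : Finset V) {c, d} = {a} := by
  ext z
  have pab : z = a → z = b → False := fun p q => h6.ab (p.symm.trans q)
  have pac : z = a → z = c → False := fun p q => h6.ac (p.symm.trans q)
  have pad : z = a → z = d → False := fun p q => h6.ad (p.symm.trans q)
  have pbc : z = b → z = c → False := fun p q => h6.bc (p.symm.trans q)
  have pbd : z = b → z = d → False := fun p q => h6.bd (p.symm.trans q)
  have pcd : z = c → z = d → False := fun p q => h6.cd (p.symm.trans q)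
  simp only [Finset.mem_symmDiff, mem_insert, mem_singleton]
  tauto

lemma sdid_b_cd {a b c d : V} (h6 : Distinct a b c d) :
    symmDiff ({b} : Finset V) {c, d} = {b, c, d} := by
  ext z
  have pab : z = a → z = b → False := fun p q => h6.ab (p.symm.trans q)
  have pac : z = a → z = c → False := fun p q => h6.ac (p.symm.trans q)
  have pad : z = a → z = d → False := fun p q => h6.ad (p.symm.trans q)
  have pbc : z = b → z = c → False := fun p q => h6.bc (p.symm.trans q)
  have pbd : z = b → z = d → False := fun p q => h6.bd (p.symm.trans q)
  have pcd : z = c → z = d → False := fun p q => h6.cd (p.symm.trans q)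
  simp only [Finset.mem_symmDiff, mem_insert, mem_singleton]
  tauto

lemma sdid_d_ab {a b c d : V} (h6 : Distinct a b c d) :
    symmDiff ({d} : Finset V) {a, b} = {a, b, d} := by
  ext z
  have pab : z = a → z = b → False := fun p q => h6.ab (p.symm.trans q)
  have pac : z = a → z = c → False := fun p q => h6.ac (p.symm.trans q)
  have pad : z = a → z = d → False := fun p q => h6.ad (p.symm.trans q)
  have pbc : z = b → z = c → False := fun p q => h6.bc (p.symm.trans q)
  have pbd : z = b → z = d → False := fun p q => h6.bd (p.symm.trans q)
  have pcd : z = c → z = d → False := fun p q => h6.cd (p.symm.trans q)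
  simp only [Finset.mem_symmDiff, mem_insert, mem_singleton]
  tauto

lemma sdid_abc_ab {a b c d : V} (h6 : Distinct a b c d) :
    symmDiff ({a, b, c} : Finset V) {a, b} = {c} := by
  ext z
  have pab : z = a → z = b → False := fun p q => h6.ab (p.symm.trans q)
  have pac : z = a → z = c → False := fun p q => h6.ac (p.symm.trans q)
  have pad : z = a → z = d → False := fun p q => h6.ad (p.symm.trans q)
  have pbc : z = b → z = c → False := fun p q => h6.bc (p.symm.trans q)
  have pbd : z = b → z = d → False := fun p q => h6.bd (p.symm.trans q)
  have pcd : z = c → z = d → False := fun p q => h6.cd (p.symm.trans q)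
  simp only [Finset.mem_symmDiff, mem_insert, mem_singleton]
  tauto

lemma sdid_d_ad {a b c d : V} (h6 : Distinct a b c d) :
    symmDiff ({d} : Finset V) {a, d} = {a} := by
  ext z
  have pab : z = a → z = b → False := fun p q => h6.ab (p.symm.trans q)
  have pac : z = a → z = c → False := fun p q => h6.ac (p.symm.trans q)
  have pad : z = a → z = d → False := fun p q => h6.ad (p.symm.trans q)
  have pbc : z = b → z = c → False := fun p q => h6.bc (p.symm.trans q)
  have pbd : z = b → z = d → False := fun p q => h6.bd (p.symm.trans q)
  have pcd : z = c → z = d → False := fun p q => h6.cd (p.symm.trans q)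
  simp only [Finset.mem_symmDiff, mem_insert, mem_singleton]
  tauto

lemma sdid_abc_ad {a b c d : V} (h6 : Distinct a b c d) :
    symmDiff ({a, b, c} : Finset V) {a, d} = {b, c, d} := by
  ext z
  have pab : z = a → z = b → False := fun p q => h6.ab (p.symm.trans q)
  have pac : z = a → z = c → False := fun p q => h6.ac (p.symm.trans q)
  have pad : z = a → z = d → False := fun p q => h6.ad (p.symm.trans q)
  have pbc : z = b → z = c → False := fun p q => h6.bc (p.symm.trans q)
  have pbd : z = b → z = d → False := fun p q => h6.bd (p.symm.trans q)
  have pcd : z = c → z = d → False := fun p q => h6.cd (p.symm.trans q)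
  simp only [Finset.mem_symmDiff, mem_insert, mem_singleton]
  tauto

lemma sdid_abc_bc {a b c d : V} (h6 : Distinct a b c d) :
    symmDiff ({a, b, c} : Finset V) {b, c} = {a} := by
  ext z
  have pab : z = a → z = b → False := fun p q => h6.ab (p.symm.trans q)
  have pac : z = a → z = c → False := fun p q => h6.ac (p.symm.trans q)
  have pad : z = a → z = d → False := fun p q => h6.ad (p.symm.trans q)
  have pbc : z = b → z = c → False := fun p q => h6.bc (p.symm.trans q)
  have pbd : z = b → z = d → False := fun p q => h6.bd (p.symm.trans q)
  have pcd : z = c → z = d → False := fun p q => h6.cd (p.symm.trans q)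
  simp only [Finset.mem_symmDiff, mem_insert, mem_singleton]
  tauto

lemma sdid_d_bc {a b c d : V} (h6 : Distinct a b c d) :
    symmDiff ({d} : Finset V) {b, c} = {b, c, d} := by
  ext z
  have pab : z = a → z = b → False := fun p q => h6.ab (p.symm.trans q)
  have pac : z = a → z = c → False := fun p q => h6.ac (p.symm.trans q)
  have pad : z = a → z = d → False := fun p q => h6.ad (p.symm.trans q)
  have pbc : z = b → z = c → False := fun p q => h6.bc (p.symm.trans q)
  have pbd : z = b → z = d → False := fun p q => h6.bd (p.symm.trans q)
  have pcd : z = c → z = d → False := fun p q => h6.cd (p.symm.trans q)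
  simp only [Finset.mem_symmDiff, mem_insert, mem_singleton]
  tauto

lemma sdid_abc_cd {a b c d : V} (h6 : Distinct a b c d) :
    symmDiff ({a, b, c} : Finset V) {c, d} = {a, b, d} := by
  ext z
  have pab : z = a → z = b → False := fun p q => h6.ab (p.symm.trans q)
  have pac : z = a → z = c → False := fun p q => h6.ac (p.symm.trans q)
  have pad : z = a → z = d → False := fun p q => h6.ad (p.symm.trans q)
  have pbc : z = b → z = c → False := fun p q => h6.bc (p.symm.trans q)
  have pbd : z = b → z = d → False := fun p q => h6.bd (p.symm.trans q)
  have pcd : z = c → z = d → False := fun p q => h6.cd (p.symm.trans q)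
  simp only [Finset.mem_symmDiff, mem_insert, mem_singleton]
  tauto

lemma sdid_d_cd {a b c d : V} (h6 : Distinct a b c d) :
    symmDiff ({d} : Finset V) {c, d} = {c} := by
  ext z
  have pab : z = a → z = b → False := fun p q => h6.ab (p.symm.trans q)
  have pac : z = a → z = c → False := fun p q => h6.ac (p.symm.trans q)
  have pad : z = a → z = d → False := fun p q => h6.ad (p.symm.trans q)
  have pbc : z = b → z = c → False := fun p q => h6.bc (p.symm.trans q)
  have pbd : z = b → z = d → False := fun p q => h6.bd (p.symm.trans q)
  have pcd : z = c → z = d → False := fun p q => h6.cd (p.symm.trans q)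
  simp only [Finset.mem_symmDiff, mem_insert, mem_singleton]
  tauto

lemma sdid_a_ab {a b c d : V} (h6 : Distinct a b c d) :
    symmDiff ({a} : Finset V) {a, b} = {b} := by
  ext z
  have pab : z = a → z = b → False := fun p q => h6.ab (p.symm.trans q)
  have pac : z = a → z = c → False := fun p q => h6.ac (p.symm.trans q)
  have pad : z = a → z = d → False := fun p q => h6.ad (p.symm.trans q)
  have pbc : z = b → z = c → False := fun p q => h6.bc (p.symm.trans q)
  have pbd : z = b → z = d → False := fun p q => h6.bd (p.symm.trans q)
  have pcd : z = c → z = d → False := fun p q => h6.cd (p.symm.trans q)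
  simp only [Finset.mem_symmDiff, mem_insert, mem_singleton]
  tauto

lemma sdid_bcd_ab {a b c d : V} (h6 : Distinct a b c d) :
    symmDiff ({b, c, d} : Finset V) {a, b} = {a, c, d} := by
  ext z
  have pab : z = a → z = b → False := fun p q => h6.ab (p.symm.trans q)
  have pac : z = a → z = c → False := fun p q => h6.ac (p.symm.trans q)
  have pad : z = a → z = d → False := fun p q => h6.ad (p.symm.trans q)
  have pbc : z = b → z = c → False := fun p q => h6.bc (p.symm.trans q)
  have pbd : z = b → z = d → False := fun p q => h6.bd (p.symm.trans q)
  have pcd : z = c → z = d → False := fun p q => h6.cd (p.symm.trans q)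
  simp only [Finset.mem_symmDiff, mem_insert, mem_singleton]
  tauto

lemma sdid_a_ad {a b c d : V} (h6 : Distinct a b c d) :
    symmDiff ({a} : Finset V) {a, d} = {d} := by
  ext z
  have pab : z = a → z = b → False := fun p q => h6.ab (p.symm.trans q)
  have pac : z = a → z = c → False := fun p q => h6.ac (p.symm.trans q)
  have pad : z = a → z = d → False := fun p q => h6.ad (p.symm.trans q)
  have pbc : z = b → z = c → False := fun p q => h6.bc (p.symm.trans q)
  have pbd : z = b → z = d → False := fun p q => h6.bd (p.symm.trans q)
  have pcd : z = c → z = d → False := fun p q => h6.cd (p.symm.trans q)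
  simp only [Finset.mem_symmDiff, mem_insert, mem_singleton]
  tauto

lemma sdid_bcd_ad {a b c d : V} (h6 : Distinct a b c d) :
    symmDiff ({b, c, d} : Finset V) {a, d} = {a, b, c} := by
  ext z
  have pab : z = a → z = b → False := fun p q => h6.ab (p.symm.trans q)
  have pac : z = a → z = c → False := fun p q => h6.ac (p.symm.trans q)
  have pad : z = a → z = d → False := fun p q => h6.ad (p.symm.trans q)
  have pbc : z = b → z = c → False := fun p q => h6.bc (p.symm.trans q)
  have pbd : z = b → z = d → False := fun p q => h6.bd (p.symm.trans q)
  have pcd : z = c → z = d → False := fun p q => h6.cd (p.symm.trans q)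
  simp only [Finset.mem_symmDiff, mem_insert, mem_singleton]
  tauto

lemma sdid_bcd_bc {a b c d : V} (h6 : Distinct a b c d) :
    symmDiff ({b, c, d} : Finset V) {b, c} = {d} := by
  ext z
  have pab : z = a → z = b → False := fun p q => h6.ab (p.symm.trans q)
  have pac : z = a → z = c → False := fun p q => h6.ac (p.symm.trans q)
  have pad : z = a → z = d → False := fun p q => h6.ad (p.symm.trans q)
  have pbc : z = b → z = c → False := fun p q => h6.bc (p.symm.trans q)
  have pbd : z = b → z = d → False := fun p q => h6.bd (p.symm.trans q)
  have pcd : z = c → z = d → False := fun p q => h6.cd (p.symm.trans q)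
  simp only [Finset.mem_symmDiff, mem_insert, mem_singleton]
  tauto

lemma sdid_a_bc {a b c d : V} (h6 : Distinct a b c d) :
    symmDiff ({a} : Finset V) {b, c} = {a, b, c} := by
  ext z
  have pab : z = a → z = b → False := fun p q => h6.ab (p.symm.trans q)
  have pac : z = a → z = c → False := fun p q => h6.ac (p.symm.trans q)
  have pad : z = a → z = d → False := fun p q => h6.ad (p.symm.trans q)
  have pbc : z = b → z = c → False := fun p q => h6.bc (p.symm.trans q)
  have pbd : z = b → z = d → False := fun p q => h6.bd (p.symm.trans q)
  have pcd : z = c → z = d → False := fun p q => h6.cd (p.symm.trans q)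
  simp only [Finset.mem_symmDiff, mem_insert, mem_singleton]
  tauto

lemma sdid_bcd_cd {a b c d : V} (h6 : Distinct a b c d) :
    symmDiff ({b, c, d} : Finset V) {c, d} = {b} := by
  ext z
  have pab : z = a → z = b → False := fun p q => h6.ab (p.symm.trans q)
  have pac : z = a → z = c → False := fun p q => h6.ac (p.symm.trans q)
  have pad : z = a → z = d → False := fun p q => h6.ad (p.symm.trans q)
  have pbc : z = b → z = c → False := fun p q => h6.bc (p.symm.trans q)
  have pbd : z = b → z = d → False := fun p q => h6.bd (p.symm.trans q)
  have pcd : z = c → z = d → False := fun p q => h6.cd (p.symm.trans q)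
  simp only [Finset.mem_symmDiff, mem_insert, mem_singleton]
  tauto

lemma sdid_a_cd {a b c d : V} (h6 : Distinct a b c d) :
    symmDiff ({a} : Finset V) {c, d} = {a, c, d} := by
  ext z
  have pab : z = a → z = b → False := fun p q => h6.ab (p.symm.trans q)
  have pac : z = a → z = c → False := fun p q => h6.ac (p.symm.trans q)
  have pad : z = a → z = d → False := fun p q => h6.ad (p.symm.trans q)
  have pbc : z = b → z = c → False := fun p q => h6.bc (p.symm.trans q)
  have pbd : z = b → z = d → False := fun p q => h6.bd (p.symm.trans q)
  have pcd : z = c → z = d → False := fun p q => h6.cd (p.symm.trans q)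
  simp only [Finset.mem_symmDiff, mem_insert, mem_singleton]
  tauto

lemma sdid_abd_ab {a b c d : V} (h6 : Distinct a b c d) :
    symmDiff ({a, b, d} : Finset V) {a, b} = {d} := by
  ext z
  have pab : z = a → z = b → False := fun p q => h6.ab (p.symm.trans q)
  have pac : z = a → z = c → False := fun p q => h6.ac (p.symm.trans q)
  have pad : z = a → z = d → False := fun p q => h6.ad (p.symm.trans q)
  have pbc : z = b → z = c → False := fun p q => h6.bc (p.symm.trans q)
  have pbd : z = b → z = d → False := fun p q => h6.bd (p.symm.trans q)
  have pcd : z = c → z = d → False := fun p q => h6.cd (p.symm.trans q)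
  simp only [Finset.mem_symmDiff, mem_insert, mem_singleton]
  tauto

lemma sdid_c_ab {a b c d : V} (h6 : Distinct a b c d) :
    symmDiff ({c} : Finset V) {a, b} = {a, b, c} := by
  ext z
  have pab : z = a → z = b → False := fun p q => h6.ab (p.symm.trans q)
  have pac : z = a → z = c → False := fun p q => h6.ac (p.symm.trans q)
  have pad : z = a → z = d → False := fun p q => h6.ad (p.symm.trans q)
  have pbc : z = b → z = c → False := fun p q => h6.bc (p.symm.trans q)
  have pbd : z = b → z = d → False := fun p q => h6.bd (p.symm.trans q)
  have pcd : z = c → z = d → False := fun p q => h6.cd (p.symm.trans q)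
  simp only [Finset.mem_symmDiff, mem_insert, mem_singleton]
  tauto

lemma sdid_abd_ad {a b c d : V} (h6 : Distinct a b c d) :
    symmDiff ({a, b, d} : Finset V) {a, d} = {b} := by
  ext z
  have pab : z = a → z = b → False := fun p q => h6.ab (p.symm.trans q)
  have pac : z = a → z = c → False := fun p q => h6.ac (p.symm.trans q)
  have pad : z = a → z = d → False := fun p q => h6.ad (p.symm.trans q)
  have pbc : z = b → z = c → False := fun p q => h6.bc (p.symm.trans q)
  have pbd : z = b → z = d → False := fun p q => h6.bd (p.symm.trans q)
  have pcd : z = c → z = d → False := fun p q => h6.cd (p.symm.trans q)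
  simp only [Finset.mem_symmDiff, mem_insert, mem_singleton]
  tauto

lemma sdid_c_ad {a b c d : V} (h6 : Distinct a b c d) :
    symmDiff ({c} : Finset V) {a, d} = {a, c, d} := by
  ext z
  have pab : z = a → z = b → False := fun p q => h6.ab (p.symm.trans q)
  have pac : z = a → z = c → False := fun p q => h6.ac (p.symm.trans q)
  have pad : z = a → z = d → False := fun p q => h6.ad (p.symm.trans q)
  have pbc : z = b → z = c → False := fun p q => h6.bc (p.symm.trans q)
  have pbd : z = b → z = d → False := fun p q => h6.bd (p.symm.trans q)
  have pcd : z = c → z = d → False := fun p q => h6.cd (p.symm.trans q)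
  simp only [Finset.mem_symmDiff, mem_insert, mem_singleton]
  tauto

lemma sdid_c_bc {a b c d : V} (h6 : Distinct a b c d) :
    symmDiff ({c} : Finset V) {b, c} = {b} := by
  ext z
  have pab : z = a → z = b → False := fun p q => h6.ab (p.symm.trans q)
  have pac : z = a → z = c → False := fun p q => h6.ac (p.symm.trans q)
  have pad : z = a → z = d → False := fun p q => h6.ad (p.symm.trans q)
  have pbc : z = b → z = c → False := fun p q => h6.bc (p.symm.trans q)
  have pbd : z = b → z = d → False := fun p q => h6.bd (p.symm.trans q)
  have pcd : z = c → z = d → False := fun p q => h6.cd (p.symm.trans q)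
  simp only [Finset.mem_symmDiff, mem_insert, mem_singleton]
  tauto

lemma sdid_abd_bc {a b c d : V} (h6 : Distinct a b c d) :
    symmDiff ({a, b, d} : Finset V) {b, c} = {a, c, d} := by
  ext z
  have pab : z = a → z = b → False := fun p q => h6.ab (p.symm.trans q)
  have pac : z = a → z = c → False := fun p q => h6.ac (p.symm.trans q)
  have pad : z = a → z = d → False := fun p q => h6.ad (p.symm.trans q)
  have pbc : z = b → z = c → False := fun p q => h6.bc (p.symm.trans q)
  have pbd : z = b → z = d → False := fun p q => h6.bd (p.symm.trans q)
  have pcd : z = c → z = d → False := fun p q => h6.cd (p.symm.trans q)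
  simp only [Finset.mem_symmDiff, mem_insert, mem_singleton]
  tauto

lemma sdid_c_cd {a b c d : V} (h6 : Distinct a b c d) :
    symmDiff ({c} : Finset V) {c, d} = {d} := by
  ext z
  have pab : z = a → z = b → False := fun p q => h6.ab (p.symm.trans q)
  have pac : z = a → z = c → False := fun p q => h6.ac (p.symm.trans q)
  have pad : z = a → z = d → False := fun p q => h6.ad (p.symm.trans q)
  have pbc : z = b → z = c → False := fun p q => h6.bc (p.symm.trans q)
  have pbd : z = b → z = d → False := fun p q => h6.bd (p.symm.trans q)
  have pcd : z = c → z = d → False := fun p q => h6.cd (p.symm.trans q)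
  simp only [Finset.mem_symmDiff, mem_insert, mem_singleton]
  tauto

lemma sdid_abd_cd {a b c d : V} (h6 : Distinct a b c d) :
    symmDiff ({a, b, d} : Finset V) {c, d} = {a, b, c} := by
  ext z
  have pab : z = a → z = b → False := fun p q => h6.ab (p.symm.trans q)
  have pac : z = a → z = c → False := fun p q => h6.ac (p.symm.trans q)
  have pad : z = a → z = d → False := fun p q => h6.ad (p.symm.trans q)
  have pbc : z = b → z = c → False := fun p q => h6.bc (p.symm.trans q)
  have pbd : z = b → z = d → False := fun p q => h6.bd (p.symm.trans q)
  have pcd : z = c → z = d → False := fun p q => h6.cd (p.symm.trans q)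
  simp only [Finset.mem_symmDiff, mem_insert, mem_singleton]
  tauto


lemma main_bij {R : Type*} [CommRing R] (G : SimpleGraph V) (w : Sym2 V → R)
    (S : Finset V) (a b c d : V) (h6 : Distinct a b c d)
    (hNC : NC G a b c d) (hAC : Separated G S a b c d) (hBD : Separated G S b c d a)
    (hdS : Disjoint ({a, b, c, d} : Finset V) S) :
    ((∑ p ∈ TT G S {b} {a, c, d}, (∏ e ∈ p.1, w e) * ∏ e ∈ p.2, w e) +
      ∑ p ∈ TT G S {d} {a, b, c}, (∏ e ∈ p.1, w e) * ∏ e ∈ p.2, w e) =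
    ((∑ p ∈ TT G S {a} {b, c, d}, (∏ e ∈ p.1, w e) * ∏ e ∈ p.2, w e) +
      ∑ p ∈ TT G S {a, b, d} {c}, (∏ e ∈ p.1, w e) * ∏ e ∈ p.2, w e) := by
  have part1 : ({b} : Finset V) ∪ {a, c, d} = {a, b, c, d} := by
    ext z; simp only [mem_union, mem_insert, mem_singleton]; try tauto
  have part2 : ({d} : Finset V) ∪ {a, b, c} = {a, b, c, d} := by
    ext z; simp only [mem_union, mem_insert, mem_singleton]; try tauto
  have part3 : ({a} : Finset V) ∪ {b, c, d} = {a, b, c, d} := by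
    ext z; simp only [mem_union, mem_insert, mem_singleton]; try tauto
  have part4 : ({a, b, d} : Finset V) ∪ {c} = {a, b, c, d} := by
    ext z; simp only [mem_union, mem_insert, mem_singleton]; try tauto
  have disj1 : Disjoint ({b} : Finset V) {a, c, d} := by
    rw [Finset.disjoint_left]
    intro z hz hz2
    simp only [mem_insert, mem_singleton] at hz hz2
    subst hz
    rcases hz2 with h | h | h
    · exact h6.ab h.symm
    · exact h6.bc h
    · exact h6.bd h
  have disj2 : Disjoint ({d} : Finset V) {a, b, c} := by
    rw [Finset.disjoint_left]
    intro z hz hz2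
    simp only [mem_insert, mem_singleton] at hz hz2
    subst hz
    rcases hz2 with h | h | h
    · exact h6.ad h.symm
    · exact h6.bd h.symm
    · exact h6.cd h.symm
  have disj3 : Disjoint ({a} : Finset V) {b, c, d} := by
    rw [Finset.disjoint_left]
    intro z hz hz2
    simp only [mem_insert, mem_singleton] at hz hz2
    subst hz
    rcases hz2 with h | h | h
    · exact h6.ab h
    · exact h6.ac h
    · exact h6.ad h
  have disj4 : Disjoint ({a, b, d} : Finset V) {c} := by
    rw [Finset.disjoint_left]
    intro z hz hz2
    simp only [mem_insert, mem_singleton] at hz hz2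
    subst hz2
    rcases hz with h | h | h
    · exact h6.ac h.symm
    · exact h6.bc h.symm
    · exact h6.cd h
  have mk1 : ∀ p ∈ TT G S {b} {a, c, d}, Setting G S a b c d {b} {a, c, d} p :=
    fun p hp => ⟨(mem_TT.mp hp).1, (mem_TT.mp hp).2, part1, disj1, hdS⟩
  have mk2 : ∀ p ∈ TT G S {d} {a, b, c}, Setting G S a b c d {d} {a, b, c} p :=
    fun p hp => ⟨(mem_TT.mp hp).1, (mem_TT.mp hp).2, part2, disj2, hdS⟩
  have mk3 : ∀ p ∈ TT G S {a} {b, c, d}, Setting G S a b c d {a} {b, c, d} p :=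
    fun p hp => ⟨(mem_TT.mp hp).1, (mem_TT.mp hp).2, part3, disj3, hdS⟩
  have mk4 : ∀ p ∈ TT G S {a, b, d} {c}, Setting G S a b c d {a, b, d} {c} p :=
    fun p hp => ⟨(mem_TT.mp hp).1, (mem_TT.mp hp).2, part4, disj4, hdS⟩
  have hbS : b ∉ S := Finset.disjoint_left.mp hdS (by simp)
  have hTdL : Disjoint (TT G S {b} {a, c, d}) (TT G S {d} {a, b, c}) := by
    rw [Finset.disjoint_left]
    intro p h1 h2
    obtain ⟨g1, _⟩ := mem_TT.mp h1
    obtain ⟨g1', _⟩ := mem_TT.mp h2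
    have hcov : cov p.1 b := g1'.2.2 b (by simp [h6.bd]) hbS
    exact (g1.2.1 b hcov) (by simp)
  have hTdR : Disjoint (TT G S {a} {b, c, d}) (TT G S {a, b, d} {c}) := by
    rw [Finset.disjoint_left]
    intro p h1 h2
    obtain ⟨g1, _⟩ := mem_TT.mp h1
    obtain ⟨g1', _⟩ := mem_TT.mp h2
    have hcov : cov p.1 b := g1.2.2 b (by simp [h6.ab.symm]) hbS
    exact (g1'.2.1 b hcov) (by simp)
  rw [← Finset.sum_union hTdL, ← Finset.sum_union hTdR]
  refine Finset.sum_nbij' (phi a b c d) (phi a b c d) ?_ ?_ ?_ ?_ ?_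
  · -- forward membership
    intro p hp
    rcases mem_union.mp hp with hp1 | hp2
    · obtain ⟨Y1, Y2, hset', hinv, hwt, htag⟩ :=
        (mk1 p hp1).phi_spec w h6 hNC hAC hBD
      rcases htag with ⟨rfl, rfl⟩ | ⟨rfl, rfl⟩ | ⟨rfl, rfl⟩ | ⟨rfl, rfl⟩
      · rw [sdid_b_ab h6, sdid_acd_ab h6] at hset'
        exact mem_union.mpr (Or.inl hset'.memTT)
      · rw [sdid_b_ad h6, sdid_acd_ad h6] at hset'
        exact mem_union.mpr (Or.inr hset'.memTT)
      · rw [sdid_acd_bc h6, sdid_b_bc h6] at hset'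
        exact mem_union.mpr (Or.inr hset'.memTT)
      · rw [sdid_acd_cd h6, sdid_b_cd h6] at hset'
        exact mem_union.mpr (Or.inl hset'.memTT)
    · obtain ⟨Y1, Y2, hset', hinv, hwt, htag⟩ :=
        (mk2 p hp2).phi_spec w h6 hNC hAC hBD
      rcases htag with ⟨rfl, rfl⟩ | ⟨rfl, rfl⟩ | ⟨rfl, rfl⟩ | ⟨rfl, rfl⟩
      · rw [sdid_d_ab h6, sdid_abc_ab h6] at hset'
        exact mem_union.mpr (Or.inr hset'.memTT)
      · rw [sdid_d_ad h6, sdid_abc_ad h6] at hset'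
        exact mem_union.mpr (Or.inl hset'.memTT)
      · rw [sdid_abc_bc h6, sdid_d_bc h6] at hset'
        exact mem_union.mpr (Or.inl hset'.memTT)
      · rw [sdid_abc_cd h6, sdid_d_cd h6] at hset'
        exact mem_union.mpr (Or.inr hset'.memTT)
  · -- backward membership
    intro p hp
    rcases mem_union.mp hp with hp1 | hp2
    · obtain ⟨Y1, Y2, hset', hinv, hwt, htag⟩ :=
        (mk3 p hp1).phi_spec w h6 hNC hAC hBD
      rcases htag with ⟨rfl, rfl⟩ | ⟨rfl, rfl⟩ | ⟨rfl, rfl⟩ | ⟨rfl, rfl⟩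
      · rw [sdid_a_ab h6, sdid_bcd_ab h6] at hset'
        exact mem_union.mpr (Or.inl hset'.memTT)
      · rw [sdid_a_ad h6, sdid_bcd_ad h6] at hset'
        exact mem_union.mpr (Or.inr hset'.memTT)
      · rw [sdid_bcd_bc h6, sdid_a_bc h6] at hset'
        exact mem_union.mpr (Or.inr hset'.memTT)
      · rw [sdid_bcd_cd h6, sdid_a_cd h6] at hset'
        exact mem_union.mpr (Or.inl hset'.memTT)
    · obtain ⟨Y1, Y2, hset', hinv, hwt, htag⟩ :=
        (mk4 p hp2).phi_spec w h6 hNC hAC hBD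
      rcases htag with ⟨rfl, rfl⟩ | ⟨rfl, rfl⟩ | ⟨rfl, rfl⟩ | ⟨rfl, rfl⟩
      · rw [sdid_abd_ab h6, sdid_c_ab h6] at hset'
        exact mem_union.mpr (Or.inr hset'.memTT)
      · rw [sdid_abd_ad h6, sdid_c_ad h6] at hset'
        exact mem_union.mpr (Or.inl hset'.memTT)
      · rw [sdid_c_bc h6, sdid_abd_bc h6] at hset'
        exact mem_union.mpr (Or.inl hset'.memTT)
      · rw [sdid_c_cd h6, sdid_abd_cd h6] at hset'
        exact mem_union.mpr (Or.inr hset'.memTT)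
  · -- left inverse
    intro p hp
    rcases mem_union.mp hp with hp1 | hp2
    · exact ((mk1 p hp1).phi_spec w h6 hNC hAC hBD).choose_spec.choose_spec.2.1
    · exact ((mk2 p hp2).phi_spec w h6 hNC hAC hBD).choose_spec.choose_spec.2.1
  · -- right inverse
    intro p hp
    rcases mem_union.mp hp with hp1 | hp2
    · exact ((mk3 p hp1).phi_spec w h6 hNC hAC hBD).choose_spec.choose_spec.2.1
    · exact ((mk4 p hp2).phi_spec w h6 hNC hAC hBD).choose_spec.choose_spec.2.1
  · -- weights
    intro p hp
    rcases mem_union.mp hp with hp1 | hp2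
    · exact (((mk1 p hp1).phi_spec w h6 hNC hAC hBD).choose_spec.choose_spec.2.2.1).symm
    · exact (((mk2 p hp2).phi_spec w h6 hNC hAC hBD).choose_spec.choose_spec.2.2.1).symm

end KuoAux

/-- **Free-boundary Kuo condensation, second four-term version** (Corollary 2, eq. (4)).
If the free set `S` on the face is both `a,c`-separated and `b,d`-separated, then the
four-term identity for deletions of an odd number of the vertices `a,b,c,d` holds. -/
theorem free_boundary_kuo_four_term_odd
    (G : SimpleGraph V) (w : Sym2 V → R) (L : List V) (S : Finset V) (a b c d : V)
    (hface : FaceConfig G L a b c d)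
    (hSL : ∀ s ∈ S, s ∈ L)
    (hdisj : Disjoint S ({a, b, c, d} : Finset V))
    (hsepAC : Separated G S a b c d)
    (hsepBD : Separated G S b c d a) :
    Mf G w S (Finset.univ \ {b}) * Mf G w S (Finset.univ \ {a, c, d}) +
      Mf G w S (Finset.univ \ {d}) * Mf G w S (Finset.univ \ {a, b, c}) =
    Mf G w S (Finset.univ \ {a}) * Mf G w S (Finset.univ \ {b, c, d}) +
      Mf G w S (Finset.univ \ {a, b, d}) * Mf G w S (Finset.univ \ {c}) := by
  have h6 := KuoAux.faceDistinct hface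
  have hNC := KuoAux.faceNC hface
  rw [KuoAux.Mf_mul, KuoAux.Mf_mul, KuoAux.Mf_mul, KuoAux.Mf_mul]
  exact KuoAux.main_bij G w S a b c d h6 hNC hsepAC hsepBD hdisj.symm
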